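/- arXiv:1801.04209 — 12 statements merged into one kernel-verified Lean document; each statement's English description precedes it below -/
import Mathlib

section
/- The map φ ↦ V_φ from L^∞(𝕋) to the bounded operators on H² is injective: if φ, ψ ∈ L^∞(𝕋) satisfy V_φ = V_ψ, then φ = ψ (as elements of L^∞(𝕋)). -/
/- Abstract model of the setting of "Slant H-Toeplitz operators on the Hardy space":
`L2` is a complex Hilbert space with Hilbert basis `(e n)_{n ∈ ℤ}` (modelling `L²(𝕋)` with
`e n = zⁿ`), `H2` is the closed linear span of `{e n : n ≥ 0}` (the Hardy space `H²`), with
`eH : ℕ → H2` the corresponding orthonormal basis of `H2`.  A symbol `φ ∈ L^∞(𝕋)` is encoded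
by its multiplication (Laurent) operator `M = M_φ` on `L2`, characterised by its matrix
`⟪e i, M (e j)⟫ = a (i - j)` where `a n = φ̂(n) = ⟨φ, e n⟩` are the Fourier coefficients of `φ`;
note that a bounded operator with such a matrix is exactly a multiplication operator by an
`L^∞` function, that `‖M‖ = ‖φ‖_∞`, `M_φ* = M_{φ̄}`, and `φ = 0 ↔ a = 0`.
`W` and `K` are the auxiliary operators with `W e_{2n} = e n`, `W e_{2n+1} = 0` (`n ∈ ℤ`) and
`K e_{2n} = e n`, `K e_{2n+1} = e_{-n-1}` (`n ≥ 0`), and `orthogonalProjection H2` is `P`.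
The slant H-Toeplitz operator `V_φ` is `W P M_φ K : H² → H²`.
(Matrix entries: the paper's `⟨f, g⟩ = ∫ f ḡ` is Mathlib's `⟪g, f⟫`, conjugate-linear in the
first slot, so the paper's matrix entry `⟨A e_j, e_i⟩` is `⟪e i, A (e j)⟫` here.) -/

open scoped ComplexInnerProductSpace

noncomputable section

/-- The map `φ ↦ V_φ` is injective: if `V_φ = V_ψ` then `φ = ψ`
(equivalently, all Fourier coefficients agree and `M_φ = M_ψ`). -/
theorem slantHToeplitz_injective
    {L2 : Type*} [NormedAddCommGroup L2] [InnerProductSpace ℂ L2] [CompleteSpace L2]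
    -- the orthonormal (Fourier) basis `e n ↔ zⁿ` of `L²(𝕋)`
    (e : HilbertBasis ℤ ℂ L2)
    -- the Hardy space `H²`, the closed linear span of `{e n : n ≥ 0}`
    (H2 : Submodule ℂ L2) [CompleteSpace H2]
    (hH2 : H2 = (Submodule.span ℂ (Set.range fun n : ℕ => e (n : ℤ))).topologicalClosure)
    (eH : ℕ → H2) (heH : ∀ n : ℕ, (eH n : L2) = e (n : ℤ))
    -- the operator `W`: `W e_{2n} = e n`, `W e_{2n+1} = 0` for all `n ∈ ℤ`
    (W : L2 →L[ℂ] L2)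
    (hW : ∀ n : ℤ, W (e (2 * n)) = e n ∧ W (e (2 * n + 1)) = 0)
    -- the operator `K : H² → L²`: `K e_{2n} = e n`, `K e_{2n+1} = e_{-n-1}` for all `n ≥ 0`
    (K : H2 →L[ℂ] L2)
    (hK : ∀ n : ℕ, K (eH (2 * n)) = e (n : ℤ) ∧ K (eH (2 * n + 1)) = e (-(n : ℤ) - 1))
    -- `φ ∈ L^∞`, encoded by its Fourier coefficients `a` and multiplication operator `M = M_φ`
    (a : ℤ → ℂ) (M : L2 →L[ℂ] L2)
    (hM : ∀ i j : ℤ, ⟪e i, M (e j)⟫ = a (i - j))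
    (b : ℤ → ℂ) (N : L2 →L[ℂ] L2)
    (hN : ∀ i j : ℤ, ⟪e i, N (e j)⟫ = b (i - j))
    -- a single operator `V` which is both `V_φ` and `V_ψ`, i.e. `V_φ = V_ψ`
    (V : H2 →L[ℂ] H2)
    (hV : ∀ f : H2, (V f : L2) = W ↑(Submodule.orthogonalProjectionOnto H2 (M (K f))))
    (hV' : ∀ f : H2, (V f : L2) = W ↑(Submodule.orthogonalProjectionOnto H2 (N (K f)))) :
    a = b ∧ M = N := by
  have hdense : Dense ((Submodule.span ℂ (Set.range e) : Submodule ℂ L2) : Set L2) :=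
    Submodule.dense_iff_topologicalClosure_eq_top.mpr e.dense_span
  have horth := orthonormal_iff_ite.mp e.orthonormal
  -- ⟪e i, W z⟫ = ⟪e (2i), z⟫
  have hWadj : ∀ (i : ℤ) (z : L2), ⟪e i, W z⟫ = ⟪e (2 * i), z⟫ := by
    intro i z
    have : (innerSL ℂ (e i)).comp W = innerSL ℂ (e (2 * i)) := by
      apply ContinuousLinearMap.ext_on hdense
      rintro _ ⟨m, rfl⟩
      rcases Int.even_or_odd m with ⟨k, hk⟩ | ⟨k, hk⟩
      · have hk' : m = 2 * k := by omega
        subst hk'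
        simp only [ContinuousLinearMap.comp_apply, innerSL_apply_apply, (hW k).1, horth]
        have : (2 * i = 2 * k) ↔ (i = k) := by omega
        simp [this]
      · have hk' : m = 2 * k + 1 := by omega
        subst hk'
        simp only [ContinuousLinearMap.comp_apply, innerSL_apply_apply, (hW k).2, horth,
          inner_zero_right]
        have : ¬ (2 * i = 2 * k + 1) := by omega
        simp [this]
    simpa using DFunLike.congr_fun this z
  -- vector extensionality from inner products against the basis
  have hvext : ∀ x y : L2, (∀ i : ℤ, ⟪e i, x⟫ = ⟪e i, y⟫) → x = y := by
    intro x y h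
    apply e.repr.injective
    apply lp.ext
    funext i
    rw [e.repr_apply_apply, e.repr_apply_apply, h i]
  -- projection disappears against e (2i), i ≥ 0
  have hproj : ∀ (i : ℕ) (y : L2),
      ⟪e (2 * (i : ℤ)), ((Submodule.orthogonalProjectionOnto H2 y : H2) : L2)⟫ = ⟪e (2 * (i : ℤ)), y⟫ := by
    intro i y
    have h2 : e (2 * (i : ℤ)) = ((eH (2 * i) : L2)) := by rw [heH]; push_cast; ring_nf
    rw [h2, ← Submodule.coe_inner, Submodule.inner_orthogonalProjectionOnto_eq_of_mem_left]
  -- key equality of matrix entries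
  have key : ∀ (i j : ℕ), ⟪e (2 * (i : ℤ)), M (K (eH j))⟫ = ⟪e (2 * (i : ℤ)), N (K (eH j))⟫ := by
    intro i j
    have h1 := congrArg (fun z => ⟪e (i : ℤ), z⟫) ((hV (eH j)).symm.trans (hV' (eH j)))
    simp only [hWadj] at h1
    rwa [hproj, hproj] at h1
  have hab : a = b := by
    funext m
    set i : ℕ := m.toNat with hi
    have him : (i : ℤ) ≥ m := Int.self_le_toNat m
    set n : ℕ := (2 * (i : ℤ) - m).toNat with hn
    have hnm : (n : ℤ) = 2 * (i : ℤ) - m := by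
      rw [hn]; exact Int.toNat_of_nonneg (by omega)
    have := key i (2 * n)
    rw [(hK n).1, hM, hN] at this
    have hmm : 2 * (i : ℤ) - (n : ℤ) = m := by omega
    rwa [hmm] at this
  refine ⟨hab, ?_⟩
  have hMN : ∀ j : ℤ, M (e j) = N (e j) := by
    intro j
    apply hvext
    intro i
    rw [hM, hN, hab]
  apply ContinuousLinearMap.ext_on hdense
  rintro _ ⟨j, rfl⟩
  exact hMN j
end
end

section
/- For every φ ∈ L^∞(𝕋) and every integer n ≥ 0, V_φ e_{2n} = B_φ e_n and V_φ e_{2n+1} = L_φ e_n; that is, on even basis vectors V_φ acts as the slant Toeplitz operator and on odd basis vectors as the slant Hankel operator. -/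
/- Abstract model of the setting of "Slant H-Toeplitz operators on the Hardy space":
`L2` is a complex Hilbert space with Hilbert basis `(e n)_{n ∈ ℤ}` (modelling `L²(𝕋)` with
`e n = zⁿ`), `H2` is the closed linear span of `{e n : n ≥ 0}` (the Hardy space `H²`), with
`eH : ℕ → H2` the corresponding orthonormal basis of `H2`.  A symbol `φ ∈ L^∞(𝕋)` is encoded
by its multiplication (Laurent) operator `M = M_φ` on `L2`, characterised by its matrix
`⟪e i, M (e j)⟫ = a (i - j)` where `a n = φ̂(n) = ⟨φ, e n⟩` are the Fourier coefficients of `φ`;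
note that a bounded operator with such a matrix is exactly a multiplication operator by an
`L^∞` function, that `‖M‖ = ‖φ‖_∞`, `M_φ* = M_{φ̄}`, and `φ = 0 ↔ a = 0`.
`W` and `K` are the auxiliary operators with `W e_{2n} = e n`, `W e_{2n+1} = 0` (`n ∈ ℤ`) and
`K e_{2n} = e n`, `K e_{2n+1} = e_{-n-1}` (`n ≥ 0`), and `Submodule.orthogonalProjectionOnto H2` is `P`.
The slant H-Toeplitz operator `V_φ` is `W P M_φ K : H² → H²`.
(Matrix entries: the paper's `⟨f, g⟩ = ∫ f ḡ` is Mathlib's `⟪g, f⟫`, conjugate-linear in the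
first slot, so the paper's matrix entry `⟨A e_j, e_i⟩` is `⟪e i, A (e j)⟫` here.) -/

open scoped ComplexInnerProductSpace

noncomputable section

/-- For every `n ≥ 0`, `V_φ e_{2n} = B_φ e_n` and `V_φ e_{2n+1} = L_φ e_n`,
where `B_φ = P W M_φ|_{H²}` is the slant Toeplitz operator and `L_φ = W H_φ = W P M_φ J` is
the slant Hankel operator. -/
theorem slantHToeplitz_even_odd_action
    {L2 : Type*} [NormedAddCommGroup L2] [InnerProductSpace ℂ L2] [CompleteSpace L2]
    -- the orthonormal (Fourier) basis `e n ↔ zⁿ` of `L²(𝕋)`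
    (e : HilbertBasis ℤ ℂ L2)
    -- the Hardy space `H²`, the closed linear span of `{e n : n ≥ 0}`
    (H2 : Submodule ℂ L2) [CompleteSpace H2]
    (hH2 : H2 = (Submodule.span ℂ (Set.range fun n : ℕ => e (n : ℤ))).topologicalClosure)
    (eH : ℕ → H2) (heH : ∀ n : ℕ, (eH n : L2) = e (n : ℤ))
    -- the operator `W`: `W e_{2n} = e n`, `W e_{2n+1} = 0` for all `n ∈ ℤ`
    (W : L2 →L[ℂ] L2)
    (hW : ∀ n : ℤ, W (e (2 * n)) = e n ∧ W (e (2 * n + 1)) = 0)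
    -- the operator `K : H² → L²`: `K e_{2n} = e n`, `K e_{2n+1} = e_{-n-1}` for all `n ≥ 0`
    (K : H2 →L[ℂ] L2)
    (hK : ∀ n : ℕ, K (eH (2 * n)) = e (n : ℤ) ∧ K (eH (2 * n + 1)) = e (-(n : ℤ) - 1))
    -- `φ ∈ L^∞`, encoded by its Fourier coefficients `a` and multiplication operator `M = M_φ`
    (a : ℤ → ℂ) (M : L2 →L[ℂ] L2)
    (hM : ∀ i j : ℤ, ⟪e i, M (e j)⟫ = a (i - j))
    -- the slant H-Toeplitz operator `V_φ = W P M_φ K : H² → H²`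
    (V : H2 →L[ℂ] H2)
    (hV : ∀ f : H2, (V f : L2) = W ↑(Submodule.orthogonalProjectionOnto H2 (M (K f))))
    -- the flip operator `J : H² → L²`, `J e_n = e_{-n-1}`
    (J : H2 →L[ℂ] L2) (hJ : ∀ n : ℕ, J (eH n) = e (-(n : ℤ) - 1))
    -- the slant Toeplitz operator `B_φ = P W M_φ|_{H²}`
    (B : H2 →L[ℂ] H2)
    (hB : ∀ f : H2, B f = Submodule.orthogonalProjectionOnto H2 (W (M (f : L2))))
    -- the slant Hankel operator `L_φ = W H_φ`, where `H_φ = P M_φ J`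
    (L : H2 →L[ℂ] H2)
    (hL : ∀ f : H2, (L f : L2) = W ↑(Submodule.orthogonalProjectionOnto H2 (M (J f)))) :
    ∀ n : ℕ, V (eH (2 * n)) = B (eH n) ∧ V (eH (2 * n + 1)) = L (eH n) := by
  classical
  have horth := orthonormal_iff_ite.mp e.orthonormal
  -- membership facts
  have hmem : ∀ m : ℤ, 0 ≤ m → e m ∈ H2 := by
    intro m hm
    rw [hH2]
    apply Submodule.le_topologicalClosure
    exact Submodule.subset_span ⟨m.toNat, congrArg e (Int.toNat_of_nonneg hm)⟩
  have hperp : ∀ m : ℤ, m < 0 → e m ∈ H2ᗮ := by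
    intro m hm
    rw [hH2, ← Submodule.orthogonal_orthogonal_eq_closure,
      Submodule.triorthogonal_eq_orthogonal]
    rw [Submodule.mem_orthogonal']
    intro u hu
    have : Submodule.span ℂ (Set.range fun n : ℕ => e (n : ℤ)) ≤
        LinearMap.ker (innerSL ℂ (e m) : L2 →ₗ[ℂ] ℂ) := by
      rw [Submodule.span_le]
      rintro - ⟨k, rfl⟩
      simp only [SetLike.mem_coe, LinearMap.mem_ker, ContinuousLinearMap.coe_coe,
        innerSL_apply_apply]
      rw [horth]
      have : ¬ (m = (k : ℤ)) := by omega
      simp [this]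
    exact this hu
  -- action of the projection on basis vectors
  have hPpos : ∀ m : ℤ, 0 ≤ m →
      ((Submodule.orthogonalProjectionOnto H2 (e m) : H2) : L2) = e m := by
    intro m hm
    have := Submodule.orthogonalProjectionOnto_mem_subspace_eq_self (K := H2) ⟨e m, hmem m hm⟩
    rw [show ((⟨e m, hmem m hm⟩ : H2) : L2) = e m from rfl] at this
    rw [this]
  have hPneg : ∀ m : ℤ, m < 0 →
      ((Submodule.orthogonalProjectionOnto H2 (e m) : H2) : L2) = 0 := by
    intro m hm
    rw [Submodule.orthogonalProjectionOnto_apply_of_mem_orthogonal (hperp m hm)]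
    simp
  -- `W` adjoint relation: `⟪e m, W x⟫ = ⟪e (2m), x⟫`
  have hWadj : ∀ (m : ℤ) (x : L2), ⟪e m, W x⟫ = ⟪e (2 * m), x⟫ := by
    intro m
    suffices h : ((innerSL ℂ (e m)).comp W) = innerSL ℂ (e (2 * m)) by
      intro x
      have := congrFun (congrArg DFunLike.coe h) x
      simpa using this
    refine ContinuousLinearMap.ext_on
      (s := Set.range e) (by
        rw [Submodule.dense_iff_topologicalClosure_eq_top]
        exact e.dense_span) ?_
    rintro - ⟨i, rfl⟩
    simp only [ContinuousLinearMap.coe_comp', Function.comp_apply, innerSL_apply_apply]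
    rcases Int.even_or_odd i with ⟨k, hk⟩ | ⟨k, hk⟩
    · have hk' : i = 2 * k := by omega
      subst hk'
      rw [(hW k).1, horth, horth]
      by_cases h : m = k
      · simp [h]
      · have : ¬ (2 * m = 2 * k) := by omega
        simp [h, this]
    · have hk' : i = 2 * k + 1 := by omega
      subst hk'
      rw [(hW k).2, horth]
      have : ¬ (2 * m = 2 * k + 1) := by omega
      simp [this]
  -- key commutation on relevant vectors
  have key : ∀ y : L2,
      W ((Submodule.orthogonalProjectionOnto H2 y : H2) : L2) =
        ((Submodule.orthogonalProjectionOnto H2 (W y) : H2) : L2) := by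
    intro y
    have inner_orthogonalProjection_left_eq_right : ∀ u v : L2,
        ⟪((Submodule.orthogonalProjectionOnto H2 u : H2) : L2), v⟫ =
          ⟪u, ((Submodule.orthogonalProjectionOnto H2 v : H2) : L2)⟫ :=
      fun u v => H2.inner_starProjection_left_eq_right u v
    apply e.repr.injective
    ext m
    rw [HilbertBasis.repr_apply_apply, HilbertBasis.repr_apply_apply]
    rw [hWadj m]
    rw [← inner_orthogonalProjection_left_eq_right,
      ← inner_orthogonalProjection_left_eq_right]
    rcases le_or_gt 0 m with hm | hm
    · rw [hPpos (2 * m) (by omega), hPpos m hm, hWadj m]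
    · rw [hPneg (2 * m) (by omega), hPneg m hm]
      simp
  intro n
  constructor
  · apply Subtype.coe_injective
    show ((V (eH (2 * n))) : L2) = ((B (eH n)) : L2)
    rw [hV, (hK n).1, ← heH n, hB]
    exact key _
  · apply Subtype.coe_injective
    show ((V (eH (2 * n + 1))) : L2) = ((L (eH n)) : L2)
    rw [hV, (hK n).2, hL, hJ]
end
end

section
/- For φ ∈ L^∞(𝕋) and all integers i, n ≥ 0: ⟨V_φ e_{2n}, e_i⟩ = φ̂(2i − n) and ⟨V_φ e_{2n+1}, e_i⟩ = φ̂(2i + n + 1). Consequently, the matrix (⟨V_φ e_j, e_i⟩)_{i,j≥0} of V_φ with respect to the basis {e_n}_{n≥0} is a slant H-Toeplitz matrix. -/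
/- Abstract model of the setting of "Slant H-Toeplitz operators on the Hardy space":
`L2` is a complex Hilbert space with Hilbert basis `(e n)_{n ∈ ℤ}` (modelling `L²(𝕋)` with
`e n = zⁿ`), `H2` is the closed linear span of `{e n : n ≥ 0}` (the Hardy space `H²`), with
`eH : ℕ → H2` the corresponding orthonormal basis of `H2`.  A symbol `φ ∈ L^∞(𝕋)` is encoded
by its multiplication (Laurent) operator `M = M_φ` on `L2`, characterised by its matrix
`⟪e i, M (e j)⟫ = a (i - j)` where `a n = φ̂(n) = ⟨φ, e n⟩` are the Fourier coefficients of `φ`;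
note that a bounded operator with such a matrix is exactly a multiplication operator by an
`L^∞` function, that `‖M‖ = ‖φ‖_∞`, `M_φ* = M_{φ̄}`, and `φ = 0 ↔ a = 0`.
`W` and `K` are the auxiliary operators with `W e_{2n} = e n`, `W e_{2n+1} = 0` (`n ∈ ℤ`) and
`K e_{2n} = e n`, `K e_{2n+1} = e_{-n-1}` (`n ≥ 0`), and `orthogonalProjection H2` is `P`.
The slant H-Toeplitz operator `V_φ` is `W P M_φ K : H² → H²`.
(Matrix entries: the paper's `⟨f, g⟩ = ∫ f ḡ` is Mathlib's `⟪g, f⟫`, conjugate-linear in the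
first slot, so the paper's matrix entry `⟨A e_j, e_i⟩` is `⟪e i, A (e j)⟫` here.) -/

open scoped ComplexInnerProductSpace

noncomputable section

/-- A doubly infinite matrix `(A i j)`, `i, j ≥ 0`, is a *slant H-Toeplitz matrix* if
`a_{k,0} = a_{k+j,4j}` for all `j ≥ 0`, `k ≥ 0`; `a_{k,0} = a_{k-j,4j-1}` for all `j ≥ 1` and
`k` with `k - j ≥ 0`; and `a_{0,2k} = a_{i,2k+4i}` for all `i ≥ 1`, `k ≥ 1`. -/
def IsSlantHToeplitzMatrix (A : ℕ → ℕ → ℂ) : Prop :=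
  (∀ k j : ℕ, A k 0 = A (k + j) (4 * j)) ∧
  (∀ k j : ℕ, 1 ≤ j → j ≤ k → A k 0 = A (k - j) (4 * j - 1)) ∧
  (∀ i k : ℕ, 1 ≤ i → 1 ≤ k → A 0 (2 * k) = A i (2 * k + 4 * i))

/-- `⟨V_φ e_{2n}, e_i⟩ = φ̂(2i - n)` and `⟨V_φ e_{2n+1}, e_i⟩ = φ̂(2i + n + 1)`
for all `i, n ≥ 0`; consequently the matrix of `V_φ` is a slant H-Toeplitz matrix. -/
theorem slantHToeplitz_matrix_entries
    {L2 : Type*} [NormedAddCommGroup L2] [InnerProductSpace ℂ L2] [CompleteSpace L2]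
    -- the orthonormal (Fourier) basis `e n ↔ zⁿ` of `L²(𝕋)`
    (e : HilbertBasis ℤ ℂ L2)
    -- the Hardy space `H²`, the closed linear span of `{e n : n ≥ 0}`
    (H2 : Submodule ℂ L2) [CompleteSpace H2]
    (hH2 : H2 = (Submodule.span ℂ (Set.range fun n : ℕ => e (n : ℤ))).topologicalClosure)
    (eH : ℕ → H2) (heH : ∀ n : ℕ, (eH n : L2) = e (n : ℤ))
    -- the operator `W`: `W e_{2n} = e n`, `W e_{2n+1} = 0` for all `n ∈ ℤ`
    (W : L2 →L[ℂ] L2)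
    (hW : ∀ n : ℤ, W (e (2 * n)) = e n ∧ W (e (2 * n + 1)) = 0)
    -- the operator `K : H² → L²`: `K e_{2n} = e n`, `K e_{2n+1} = e_{-n-1}` for all `n ≥ 0`
    (K : H2 →L[ℂ] L2)
    (hK : ∀ n : ℕ, K (eH (2 * n)) = e (n : ℤ) ∧ K (eH (2 * n + 1)) = e (-(n : ℤ) - 1))
    -- `φ ∈ L^∞`, encoded by its Fourier coefficients `a` and multiplication operator `M = M_φ`
    (a : ℤ → ℂ) (M : L2 →L[ℂ] L2)
    (hM : ∀ i j : ℤ, ⟪e i, M (e j)⟫ = a (i - j))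
    -- the slant H-Toeplitz operator `V_φ = W P M_φ K : H² → H²`
    (V : H2 →L[ℂ] H2)
    (hV : ∀ f : H2, (V f : L2) = W ↑(Submodule.orthogonalProjectionOnto H2 (M (K f))))
 :
    (∀ i n : ℕ, ⟪eH i, V (eH (2 * n))⟫ = a (2 * (i : ℤ) - (n : ℤ)) ∧
      ⟪eH i, V (eH (2 * n + 1))⟫ = a (2 * (i : ℤ) + (n : ℤ) + 1)) ∧
    IsSlantHToeplitzMatrix (fun i j : ℕ => ⟪eH i, V (eH j)⟫) := by
    classical
  have horth := e.orthonormal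
  -- W acts like adjoint of doubling on the left slot
  have hWs : ∀ (i : ℤ) (z : L2), ⟪e i, W z⟫ = ⟪e (2 * i), z⟫ := by
    intro i z
    have hdense : Dense (Submodule.span ℂ (Set.range (⇑e)) : Set L2) :=
      Submodule.dense_iff_topologicalClosure_eq_top.mpr e.dense_span
    have : (innerSL ℂ (e i)).comp W = innerSL ℂ (e (2 * i)) := by
      apply ContinuousLinearMap.ext_on hdense
      rintro _ ⟨m, rfl⟩
      rcases Int.even_or_odd m with ⟨n, hn⟩ | ⟨n, hn⟩
      · have hm : m = 2 * n := by omega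
        subst hm
        simp only [ContinuousLinearMap.comp_apply, innerSL_apply_apply, (hW n).1]
        rw [orthonormal_iff_ite.mp horth, orthonormal_iff_ite.mp horth]
        simp only [mul_right_inj' (two_ne_zero (α := ℤ))]
      · have hm : m = 2 * n + 1 := by omega
        subst hm
        simp only [ContinuousLinearMap.comp_apply, innerSL_apply_apply, (hW n).2, inner_zero_right]
        rw [orthonormal_iff_ite.mp horth]
        have : ¬ (2 * i = 2 * n + 1) := by omega
        simp [this]
    have h := ContinuousLinearMap.ext_iff.mp this z
    simpa using h
  -- main entry computation
  have key : ∀ (i : ℕ) (f : H2), ⟪eH i, V f⟫ = ⟪e (2 * (i : ℤ)), M (K f)⟫ := by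
    intro i f
    rw [Submodule.coe_inner, hV f, heH]
    rw [hWs]
    have hmem : e (2 * (i : ℤ)) ∈ H2 := by
      have : ((eH (2 * i) : L2)) = e (2 * (i : ℤ)) := by
        rw [heH]; norm_cast
      rw [← this]; exact (eH (2 * i)).2
    have := Submodule.inner_orthogonalProjectionOnto_eq_of_mem_right (K := H2) ⟨e (2 * (i : ℤ)), hmem⟩ (M (K f))
    have h2 : ⟪(e (2 * (i : ℤ))), (Submodule.orthogonalProjectionOnto H2 (M (K f)) : L2)⟫
        = ⟪e (2 * (i : ℤ)), M (K f)⟫ := by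
      have := Submodule.inner_orthogonalProjectionOnto_eq_of_mem_left (K := H2) ⟨e (2 * (i : ℤ)), hmem⟩ (M (K f))
      rw [Submodule.coe_inner] at this
      simpa using this
    exact h2
  have main : ∀ i n : ℕ, ⟪eH i, V (eH (2 * n))⟫ = a (2 * (i : ℤ) - (n : ℤ)) ∧
      ⟪eH i, V (eH (2 * n + 1))⟫ = a (2 * (i : ℤ) + (n : ℤ) + 1) := by
    intro i n
    constructor
    · rw [key, (hK n).1, hM]
    · rw [key, (hK n).2, hM]; ring_nf
  refine ⟨main, ?_, ?_, ?_⟩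
  · intro k j
    have h1 := (main k 0).1
    have h2 := (main (k + j) (2 * j)).1
    have e0 : (2 : ℕ) * 0 = 0 := rfl
    have e4 : 2 * (2 * j) = 4 * j := by ring
    rw [e0] at h1; rw [e4] at h2
    simp only [h1, h2]
    push_cast; ring_nf
  · intro k j hj hjk
    have h1 := (main k 0).1
    have h2 := (main (k - j) (2 * j - 1)).2
    have e0 : (2 : ℕ) * 0 = 0 := rfl
    have e4 : 2 * (2 * j - 1) + 1 = 4 * j - 1 := by omega
    rw [e0] at h1; rw [e4] at h2
    simp only [h1, h2]
    congr 1
    have c1 : ((k - j : ℕ) : ℤ) = (k : ℤ) - j := by omega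
    have c2 : ((2 * j - 1 : ℕ) : ℤ) = 2 * (j : ℤ) - 1 := by omega
    rw [c1, c2]; push_cast; ring
  · intro i k hi hk
    have h1 := (main 0 k).1
    have h2 := (main i (k + 2 * i)).1
    have e4 : 2 * (k + 2 * i) = 2 * k + 4 * i := by ring
    rw [e4] at h2
    simp only [h1, h2]
    push_cast; ring_nf
end
end

section
/- If φ ∈ L^∞(𝕋) is an inner function, i.e. |φ(z)| = 1 for almost every z ∈ 𝕋, then V_φ V_φ* = I on H²; equivalently, the adjoint V_φ* of the slant H-Toeplitz operator V_φ is an isometry. -/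
/- Abstract model of the setting of "Slant H-Toeplitz operators on the Hardy space":
`L2` is a complex Hilbert space with Hilbert basis `(e n)_{n ∈ ℤ}` (modelling `L²(𝕋)` with
`e n = zⁿ`), `H2` is the closed linear span of `{e n : n ≥ 0}` (the Hardy space `H²`), with
`eH : ℕ → H2` the corresponding orthonormal basis of `H2`.  A symbol `φ ∈ L^∞(𝕋)` is encoded
by its multiplication (Laurent) operator `M = M_φ` on `L2`, characterised by its matrix
`⟪e i, M (e j)⟫ = a (i - j)` where `a n = φ̂(n) = ⟨φ, e n⟩` are the Fourier coefficients of `φ`;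
note that a bounded operator with such a matrix is exactly a multiplication operator by an
`L^∞` function, that `‖M‖ = ‖φ‖_∞`, `M_φ* = M_{φ̄}`, and `φ = 0 ↔ a = 0`.
`W` and `K` are the auxiliary operators with `W e_{2n} = e n`, `W e_{2n+1} = 0` (`n ∈ ℤ`) and
`K e_{2n} = e n`, `K e_{2n+1} = e_{-n-1}` (`n ≥ 0`), and `orthogonalProjection H2` is `P`.
The slant H-Toeplitz operator `V_φ` is `W P M_φ K : H² → H²`.
(Matrix entries: the paper's `⟨f, g⟩ = ∫ f ḡ` is Mathlib's `⟪g, f⟫`, conjugate-linear in the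
first slot, so the paper's matrix entry `⟨A e_j, e_i⟩` is `⟪e i, A (e j)⟫` here.) -/

open scoped ComplexInnerProductSpace

noncomputable section

private lemma hb_elem_ext {ι E : Type*} [NormedAddCommGroup E] [InnerProductSpace ℂ E]
    [CompleteSpace E] (b : HilbertBasis ι ℂ E) {x y : E}
    (h : ∀ i, ⟪b i, x⟫ = ⟪b i, y⟫) : x = y := by
  apply b.repr.injective
  apply lp.ext
  funext i
  rw [b.repr_apply_apply, b.repr_apply_apply, h i]

/-- the parity equivalence `ℕ ≃ ℤ`, `2k ↦ k`, `2k+1 ↦ -k-1`. -/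
private def natEquivInt : ℕ ≃ ℤ where
  toFun n := if Even n then ((n / 2 : ℕ) : ℤ) else -((n / 2 : ℕ) : ℤ) - 1
  invFun k := if 0 ≤ k then 2 * k.toNat else 2 * (-k - 1).toNat + 1
  left_inv n := by
    simp only [Nat.even_iff]
    split_ifs <;> omega
  right_inv k := by
    simp only [Nat.even_iff]
    split_ifs <;> omega

private lemma natEquivInt_even (r : ℕ) : natEquivInt (2 * r) = (r : ℤ) := by
  simp only [natEquivInt, Equiv.coe_fn_mk, if_pos (even_two_mul r)]
  have : 2 * r / 2 = r := by omega
  rw [this]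

private lemma natEquivInt_odd (r : ℕ) : natEquivInt (2 * r + 1) = -(r : ℤ) - 1 := by
  have hne : ¬ Even (2 * r + 1) := by simp [Nat.even_iff]
  simp only [natEquivInt, Equiv.coe_fn_mk, if_neg hne]
  have : (2 * r + 1) / 2 = r := by omega
  rw [this]

/-- If `φ` is inner, i.e. `|φ| = 1` a.e. (equivalently `M_φ* M_φ = I`),
then `V_φ V_φ* = I` on `H²`, i.e. `V_φ*` is an isometry. -/
theorem adjoint_isometry_of_inner
    {L2 : Type*} [NormedAddCommGroup L2] [InnerProductSpace ℂ L2] [CompleteSpace L2]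
    -- the orthonormal (Fourier) basis `e n ↔ zⁿ` of `L²(𝕋)`
    (e : HilbertBasis ℤ ℂ L2)
    -- the Hardy space `H²`, the closed linear span of `{e n : n ≥ 0}`
    (H2 : Submodule ℂ L2) [CompleteSpace H2]
    (hH2 : H2 = (Submodule.span ℂ (Set.range fun n : ℕ => e (n : ℤ))).topologicalClosure)
    (eH : ℕ → H2) (heH : ∀ n : ℕ, (eH n : L2) = e (n : ℤ))
    -- the operator `W`: `W e_{2n} = e n`, `W e_{2n+1} = 0` for all `n ∈ ℤ`
    (W : L2 →L[ℂ] L2)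
    (hW : ∀ n : ℤ, W (e (2 * n)) = e n ∧ W (e (2 * n + 1)) = 0)
    -- the operator `K : H² → L²`: `K e_{2n} = e n`, `K e_{2n+1} = e_{-n-1}` for all `n ≥ 0`
    (K : H2 →L[ℂ] L2)
    (hK : ∀ n : ℕ, K (eH (2 * n)) = e (n : ℤ) ∧ K (eH (2 * n + 1)) = e (-(n : ℤ) - 1))
    -- `φ ∈ L^∞`, encoded by its Fourier coefficients `a` and multiplication operator `M = M_φ`
    (a : ℤ → ℂ) (M : L2 →L[ℂ] L2)
    (hM : ∀ i j : ℤ, ⟪e i, M (e j)⟫ = a (i - j))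
    -- the slant H-Toeplitz operator `V_φ = W P M_φ K : H² → H²`
    (V : H2 →L[ℂ] H2)
    (hV : ∀ f : H2, (V f : L2) = W ↑(Submodule.orthogonalProjection H2 (M (K f))))
    -- `φ` is inner: `|φ(z)| = 1` a.e., equivalently `M_φ* M_φ = M_{|φ|²} = I`
    (hinner : (ContinuousLinearMap.adjoint M).comp M = ContinuousLinearMap.id ℂ L2) :
    V.comp (ContinuousLinearMap.adjoint V) = ContinuousLinearMap.id ℂ H2 := by
  classical
  have he : ∀ i j : ℤ, ⟪e i, e j⟫ = if i = j then (1 : ℂ) else 0 :=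
    orthonormal_iff_ite.mp e.orthonormal
  have hmem2 : ∀ i : ℕ, e (2 * (i : ℤ)) ∈ H2 := fun i => by
    have h := (eH (2 * i)).2
    rw [heH (2 * i)] at h
    rwa [show ((2 * i : ℕ) : ℤ) = 2 * (i : ℤ) by push_cast; ring] at h
  -- W adjoint on the basis
  have hWadj : ∀ i : ℤ, ContinuousLinearMap.adjoint W (e i) = e (2 * i) := by
    intro i
    apply hb_elem_ext e
    intro k
    rw [ContinuousLinearMap.adjoint_inner_right]
    rcases Int.even_or_odd k with ⟨n, rfl⟩ | ⟨n, rfl⟩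
    · rw [show n + n = 2 * n by ring, (hW n).1, he, he]
      by_cases h : n = i
      · rw [if_pos h, if_pos (by omega)]
      · rw [if_neg h, if_neg (by omega)]
    · rw [(hW n).2, inner_zero_left, he, if_neg (by omega)]
  have hWin : ∀ (i : ℤ) (z : L2), ⟪e i, W z⟫ = ⟪e (2 * i), z⟫ := fun i z => by
    rw [← ContinuousLinearMap.adjoint_inner_left, hWadj]
  -- matrix entries of V
  have hVmat : ∀ (i : ℕ) (x : H2) (k : ℤ), K x = e k → ⟪eH i, V x⟫ = a (2 * (i : ℤ) - k) := by
    intro i x k hx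
    have h1 : ⟪(⟨e (2 * (i : ℤ)), hmem2 i⟩ : H2), Submodule.orthogonalProjection H2 (M (K x))⟫
        = ⟪e (2 * (i : ℤ)), M (K x)⟫ :=
      Submodule.inner_orthogonalProjectionOnto_eq_of_mem_left (K := H2) (⟨e (2 * (i : ℤ)), hmem2 i⟩ : H2) (M (K x))
    have h2 : ⟪e (2 * (i : ℤ)), (↑(Submodule.orthogonalProjection H2 (M (K x))) : L2)⟫
        = a (2 * (i : ℤ) - k) := by
      rw [show ⟪e (2 * (i : ℤ)), (↑(Submodule.orthogonalProjection H2 (M (K x))) : L2)⟫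
          = ⟪(⟨e (2 * (i : ℤ)), hmem2 i⟩ : H2), Submodule.orthogonalProjection H2 (M (K x))⟫ from rfl,
        h1, hx, hM]
    rw [Submodule.coe_inner, heH, hV, hWin, h2]
  have hV1 : ∀ i k : ℕ, ⟪eH i, V (eH (2 * k))⟫ = a (2 * (i : ℤ) - k) :=
    fun i k => hVmat i _ _ (hK k).1
  have hV2 : ∀ i k : ℕ, ⟪eH i, V (eH (2 * k + 1))⟫ = a (2 * (i : ℤ) + k + 1) := fun i k => by
    rw [hVmat i _ _ (hK k).2]
    congr 1
    ring
  -- orthonormality of eH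
  have heHon : Orthonormal ℂ eH := by
    rw [orthonormal_iff_ite]
    intro i j
    rw [Submodule.coe_inner, heH, heH, he]
    by_cases h : i = j
    · simp [h]
    · rw [if_neg (by exact_mod_cast h), if_neg h]
  -- density of the span of eH in H2
  have hdense : Dense ((Submodule.span ℂ (Set.range eH) : Submodule ℂ H2) : Set H2) := by
    intro x
    have hce : Topology.IsClosedEmbedding (⇑H2.subtype) :=
      H2.subtypeₗᵢ.isometry.isClosedEmbedding
    have hx : (x : L2) ∈
        closure ((Submodule.span ℂ (Set.range fun n : ℕ => e (n : ℤ))) : Set L2) := by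
      have h2 : (x : L2) ∈
          (Submodule.span ℂ (Set.range fun n : ℕ => e (n : ℤ))).topologicalClosure := by
        rw [← hH2]; exact x.2
      exact h2
    have hfun : ⇑H2.subtype ∘ eH = (fun n : ℕ => e (n : ℤ)) := funext fun n => heH n
    have hmap : ((Submodule.span ℂ (Set.range fun n : ℕ => e (n : ℤ))) : Set L2)
        = H2.subtype '' ((Submodule.span ℂ (Set.range eH) : Submodule ℂ H2) : Set H2) := by
      rw [← Submodule.map_coe, Submodule.map_span, ← Set.range_comp, hfun]
    rw [hmap, hce.closure_image_eq] at hx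
    obtain ⟨y, hy, hyx⟩ := hx
    have : y = x := Subtype.ext hyx
    rwa [this] at hy
  have hsp : ⊤ ≤ (Submodule.span ℂ (Set.range eH)).topologicalClosure := fun x _ => hdense x
  let bH : HilbertBasis ℕ ℂ H2 := HilbertBasis.mk heHon hsp
  have hbH : ∀ n, bH n = eH n := fun n => congrFun (HilbertBasis.coe_mk heHon hsp) n
  -- the key sum identity coming from innerness
  have hsum : ∀ p q : ℤ, ∑' k : ℤ, (starRingEnd ℂ) (a (k - p)) * a (k - q) = ⟪e p, e q⟫ := by
    intro p q
    have h1 : ⟪e p, e q⟫ = ⟪M (e p), M (e q)⟫ := by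
      conv_lhs => rw [show e q = (ContinuousLinearMap.id ℂ L2) (e q) from rfl, ← hinner]
      rw [ContinuousLinearMap.comp_apply, ContinuousLinearMap.adjoint_inner_right]
    rw [h1, ← e.tsum_inner_mul_inner]
    apply tsum_congr
    intro k
    rw [← inner_conj_symm (M (e p)) (e k), hM, hM]
  have key : ∀ m : ℕ, V (ContinuousLinearMap.adjoint V (eH m)) = eH m := by
    intro m
    apply hb_elem_ext bH
    intro i
    rw [hbH]
    have hkey : ∑' k : ℤ, a (2 * (i : ℤ) - k) * (starRingEnd ℂ) (a (2 * (m : ℤ) - k))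
        = ⟪e (2 * (i : ℤ)), e (2 * (m : ℤ))⟫ := by
      rw [← hsum (2 * (i : ℤ)) (2 * (m : ℤ)),
        ← (Equiv.subLeft (2 * (i : ℤ) + 2 * m)).tsum_eq
          (fun k => (starRingEnd ℂ) (a (k - 2 * i)) * a (k - 2 * m))]
      apply tsum_congr
      intro k
      simp only [Equiv.subLeft_apply]
      rw [show 2 * (i : ℤ) + 2 * m - k - 2 * i = 2 * m - k by ring,
        show 2 * (i : ℤ) + 2 * m - k - 2 * m = 2 * i - k by ring, mul_comm]
    calc ⟪eH i, V (ContinuousLinearMap.adjoint V (eH m))⟫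
        = ⟪ContinuousLinearMap.adjoint V (eH i), ContinuousLinearMap.adjoint V (eH m)⟫ :=
          (ContinuousLinearMap.adjoint_inner_left _ _ _).symm
      _ = ∑' n, ⟪ContinuousLinearMap.adjoint V (eH i), bH n⟫
            * ⟪bH n, ContinuousLinearMap.adjoint V (eH m)⟫ :=
          (bH.tsum_inner_mul_inner _ _).symm
      _ = ∑' n, ⟪eH i, V (eH n)⟫ * (starRingEnd ℂ) ⟪eH m, V (eH n)⟫ := by
          apply tsum_congr
          intro n
          rw [hbH, ContinuousLinearMap.adjoint_inner_left,
            ContinuousLinearMap.adjoint_inner_right, ← inner_conj_symm (V (eH n)) (eH m)]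
      _ = ∑' k : ℤ, a (2 * (i : ℤ) - k) * (starRingEnd ℂ) (a (2 * (m : ℤ) - k)) := by
          rw [← natEquivInt.tsum_eq
            (fun k => a (2 * (i : ℤ) - k) * (starRingEnd ℂ) (a (2 * (m : ℤ) - k)))]
          apply tsum_congr
          intro n
          rcases Nat.even_or_odd n with ⟨r, rfl⟩ | ⟨r, rfl⟩
          · rw [show r + r = 2 * r by ring, hV1, hV1, natEquivInt_even]
          · rw [hV2, hV2, natEquivInt_odd,
              show 2 * (i : ℤ) - (-(r : ℤ) - 1) = 2 * (i : ℤ) + r + 1 by ring,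
              show 2 * (m : ℤ) - (-(r : ℤ) - 1) = 2 * (m : ℤ) + r + 1 by ring]
      _ = ⟪e (2 * (i : ℤ)), e (2 * (m : ℤ))⟫ := hkey
      _ = ⟪eH i, eH m⟫ := by
          rw [Submodule.coe_inner, heH, heH, he, he]
          by_cases h : (i : ℤ) = (m : ℤ)
          · rw [if_pos (by omega), if_pos h]
          · rw [if_neg (by omega), if_neg h]
  apply ContinuousLinearMap.ext_on hdense
  rintro x ⟨m, rfl⟩
  simpa using key m
end
end

section
/- Let φ ∈ L^∞(𝕋). If the adjoint V_φ* of the slant H-Toeplitz operator V_φ is an isometry on H² (equivalently V_φ V_φ* = I), then Σ_{n∈ℤ} |φ̂(n)|² = 1, i.e. the L²-norm of φ equals 1. -/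
/- Abstract model of the setting of "Slant H-Toeplitz operators on the Hardy space":
`L2` is a complex Hilbert space with Hilbert basis `(e n)_{n ∈ ℤ}` (modelling `L²(𝕋)` with
`e n = zⁿ`), `H2` is the closed linear span of `{e n : n ≥ 0}` (the Hardy space `H²`), with
`eH : ℕ → H2` the corresponding orthonormal basis of `H2`.  A symbol `φ ∈ L^∞(𝕋)` is encoded
by its multiplication (Laurent) operator `M = M_φ` on `L2`, characterised by its matrix
`⟪e i, M (e j)⟫ = a (i - j)` where `a n = φ̂(n) = ⟨φ, e n⟩` are the Fourier coefficients of `φ`;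
note that a bounded operator with such a matrix is exactly a multiplication operator by an
`L^∞` function, that `‖M‖ = ‖φ‖_∞`, `M_φ* = M_{φ̄}`, and `φ = 0 ↔ a = 0`.
`W` and `K` are the auxiliary operators with `W e_{2n} = e n`, `W e_{2n+1} = 0` (`n ∈ ℤ`) and
`K e_{2n} = e n`, `K e_{2n+1} = e_{-n-1}` (`n ≥ 0`), and `orthogonalProjection H2` is `P`.
The slant H-Toeplitz operator `V_φ` is `W P M_φ K : H² → H²`.
(Matrix entries: the paper's `⟨f, g⟩ = ∫ f ḡ` is Mathlib's `⟪g, f⟫`, conjugate-linear in the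
first slot, so the paper's matrix entry `⟨A e_j, e_i⟩` is `⟪e i, A (e j)⟫` here.) -/

open scoped ComplexInnerProductSpace

noncomputable section

/-- If `V_φ*` is an isometry (equivalently `V_φ V_φ* = I`), then
`Σ_{n ∈ ℤ} |φ̂(n)|² = 1`. -/
theorem sum_sq_fourierCoeffs_eq_one_of_adjoint_isometry
    {L2 : Type*} [NormedAddCommGroup L2] [InnerProductSpace ℂ L2] [CompleteSpace L2]
    -- the orthonormal (Fourier) basis `e n ↔ zⁿ` of `L²(𝕋)`
    (e : HilbertBasis ℤ ℂ L2)
    -- the Hardy space `H²`, the closed linear span of `{e n : n ≥ 0}`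
    (H2 : Submodule ℂ L2) [CompleteSpace H2]
    (hH2 : H2 = (Submodule.span ℂ (Set.range fun n : ℕ => e (n : ℤ))).topologicalClosure)
    (eH : ℕ → H2) (heH : ∀ n : ℕ, (eH n : L2) = e (n : ℤ))
    -- the operator `W`: `W e_{2n} = e n`, `W e_{2n+1} = 0` for all `n ∈ ℤ`
    (W : L2 →L[ℂ] L2)
    (hW : ∀ n : ℤ, W (e (2 * n)) = e n ∧ W (e (2 * n + 1)) = 0)
    -- the operator `K : H² → L²`: `K e_{2n} = e n`, `K e_{2n+1} = e_{-n-1}` for all `n ≥ 0`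
    (K : H2 →L[ℂ] L2)
    (hK : ∀ n : ℕ, K (eH (2 * n)) = e (n : ℤ) ∧ K (eH (2 * n + 1)) = e (-(n : ℤ) - 1))
    -- `φ ∈ L^∞`, encoded by its Fourier coefficients `a` and multiplication operator `M = M_φ`
    (a : ℤ → ℂ) (M : L2 →L[ℂ] L2)
    (hM : ∀ i j : ℤ, ⟪e i, M (e j)⟫ = a (i - j))
    -- the slant H-Toeplitz operator `V_φ = W P M_φ K : H² → H²`
    (V : H2 →L[ℂ] H2)
    (hV : ∀ f : H2, (V f : L2) = W ↑(Submodule.orthogonalProjection H2 (M (K f))))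
    (hiso : V.comp (ContinuousLinearMap.adjoint V) = ContinuousLinearMap.id ℂ H2) :
    HasSum (fun n : ℤ => ‖a n‖ ^ 2) 1 := by

  classical
  have hog : ∀ i j : ℤ, ⟪e i, e j⟫ = if i = j then 1 else 0 := fun i j =>
    orthonormal_iff_ite.mp e.orthonormal i j
  set g : H2 := ContinuousLinearMap.adjoint V (eH 0) with hg
  -- adjoint of W fixes e 0
  have hWadj : ContinuousLinearMap.adjoint W (e 0) = e 0 := by
    apply e.repr.injective
    refine lp.ext (funext fun k => ?_)
    show e.repr (ContinuousLinearMap.adjoint W (e 0)) k = e.repr (e 0) k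
    rw [e.repr_apply_apply, e.repr_apply_apply,
      ContinuousLinearMap.adjoint_inner_right]
    rcases Int.even_or_odd k with ⟨n, hn⟩ | ⟨n, hn⟩
    · have hk : k = 2 * n := by omega
      subst hk
      rw [(hW n).1, hog, hog]
      by_cases h : n = 0
      · subst h; norm_num
      · rw [if_neg h, if_neg (by omega)]
    · have hk : k = 2 * n + 1 := by omega
      subst hk
      rw [(hW n).2, inner_zero_left, hog, if_neg (by omega)]
  -- elements of H2 are orthogonal to e i for i < 0
  have hneg' : ∀ i : ℤ, i < 0 → ∀ v : L2, v ∈ H2 → ⟪e i, v⟫ = 0 := by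
    intro i hi v hv
    rw [hH2] at hv
    have hle : (Submodule.span ℂ (Set.range fun n : ℕ => e (n : ℤ))).topologicalClosure ≤
        LinearMap.ker ((innerSL ℂ (e i) : L2 →L[ℂ] ℂ) : L2 →ₗ[ℂ] ℂ) := by
      apply Submodule.topologicalClosure_minimal
      · rw [Submodule.span_le]
        rintro x ⟨n, rfl⟩
        simp only [SetLike.mem_coe, LinearMap.mem_ker, ContinuousLinearMap.coe_coe,
          innerSL_apply_apply]
        rw [hog, if_neg (by omega)]
      · exact ContinuousLinearMap.isClosed_ker (innerSL ℂ (e i) : L2 →L[ℂ] ℂ)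
    exact hle hv
  have hneg : ∀ i : ℤ, i < 0 → ⟪e i, (g : L2)⟫ = 0 := fun i hi =>
    hneg' i hi _ (SetLike.coe_mem _)
  have h0 : (e (0 : ℤ)) = ((eH 0 : H2) : L2) := by rw [heH 0, Nat.cast_zero]
  -- coefficient formula in nonnegative degrees
  have hcoef : ∀ k : ℕ, ∀ m : ℤ, K (eH k) = e m →
      ⟪e (k : ℤ), (g : L2)⟫ = starRingEnd ℂ (a (-m)) := by
    intro k m hKm
    have h1 : ⟪e (k : ℤ), (g : L2)⟫ = ⟪eH k, g⟫ := by
      rw [Submodule.coe_inner, heH k]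
    rw [h1, hg, ContinuousLinearMap.adjoint_inner_right, ← inner_conj_symm]
    congr 1
    have h2 : ⟪eH 0, V (eH k)⟫ = ⟪((eH 0 : H2) : L2), ((V (eH k) : H2) : L2)⟫ :=
      Submodule.coe_inner _ _ _
    rw [h2, ← h0, hV, ← ContinuousLinearMap.adjoint_inner_left, hWadj, h0,
      ← Submodule.coe_inner, Submodule.inner_orthogonalProjection_eq_of_mem_left, ← h0, hKm, hM]
    norm_num
  have hcoefA : ∀ n : ℕ, ⟪e ((2 * n : ℕ) : ℤ), (g : L2)⟫ = starRingEnd ℂ (a (-(n : ℤ))) :=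
    fun n => hcoef (2 * n) (n : ℤ) (hK n).1
  have hcoefB : ∀ n : ℕ, ⟪e ((2 * n + 1 : ℕ) : ℤ), (g : L2)⟫
      = starRingEnd ℂ (a ((n : ℤ) + 1)) := by
    intro n
    have h := hcoef (2 * n + 1) (-(n : ℤ) - 1) (hK n).2
    have h2 : (-(-(n : ℤ) - 1)) = (n : ℤ) + 1 := by ring
    rwa [h2] at h
  -- ⟪g, g⟫ = 1
  have hgg : ⟪(g : L2), (g : L2)⟫ = 1 := by
    rw [← Submodule.coe_inner, hg, ContinuousLinearMap.adjoint_inner_left]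
    have hVV : V (ContinuousLinearMap.adjoint V (eH 0)) = eH 0 := by
      have h := congrArg (fun T : H2 →L[ℂ] H2 => T (eH 0)) hiso
      simpa using h
    rw [hVV, Submodule.coe_inner, ← h0, hog]
    norm_num
  -- Parseval
  have hPar : HasSum (fun i : ℤ => ⟪(g : L2), e i⟫ * ⟪e i, (g : L2)⟫) 1 := by
    have h := e.hasSum_inner_mul_inner (g : L2) (g : L2)
    rwa [hgg] at h
  have hPar2 : HasSum (fun i : ℤ => ((‖⟪e i, (g : L2)⟫‖ ^ 2 : ℝ) : ℂ)) 1 := by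
    refine hPar.congr_fun fun i => ?_
    rw [← inner_conj_symm, RCLike.norm_conj, RCLike.mul_conj]
    norm_num
  -- reindexing
  set σ : ℤ → ℤ := fun n => if n ≤ 0 then -2 * n else 2 * n - 1 with hσ
  have hσinj : Function.Injective σ := by
    intro x y hxy
    simp only [hσ] at hxy
    by_cases hx : x ≤ 0 <;> by_cases hy : y ≤ 0 <;>
      simp only [hx, hy, if_true, if_false, if_pos, if_neg, not_false_iff] at hxy <;>
      omega
  have hσrange : ∀ x : ℤ, x ∉ Set.range σ → ((‖⟪e x, (g : L2)⟫‖ ^ 2 : ℝ) : ℂ) = 0 := by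
    intro x hx
    have hxneg : x < 0 := by
      by_contra h
      push_neg at h
      apply hx
      rcases Int.even_or_odd x with ⟨n, hn⟩ | ⟨n, hn⟩
      · exact ⟨-n, by simp only [hσ]; rw [if_pos (by omega)]; omega⟩
      · exact ⟨n + 1, by simp only [hσ]; rw [if_neg (by omega)]; omega⟩
    rw [hneg x hxneg]
    norm_num
  have hmain : HasSum (fun n : ℤ => ((‖⟪e (σ n), (g : L2)⟫‖ ^ 2 : ℝ) : ℂ)) 1 :=
    (Function.Injective.hasSum_iff hσinj hσrange).mpr hPar2
  have hterm : ∀ n : ℤ, (‖⟪e (σ n), (g : L2)⟫‖ ^ 2 : ℝ) = ‖a n‖ ^ 2 := by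
    intro n
    by_cases hn : n ≤ 0
    · have h1 : σ n = ((2 * (-n).toNat : ℕ) : ℤ) := by
        simp only [hσ]; rw [if_pos hn]; push_cast; omega
      rw [h1, hcoefA]
      have h2 : (-(((-n).toNat : ℕ) : ℤ)) = n := by omega
      rw [h2]
      simp
    · have h1 : σ n = ((2 * (n - 1).toNat + 1 : ℕ) : ℤ) := by
        simp only [hσ]; rw [if_neg hn]; push_cast; omega
      rw [h1, hcoefB]
      have h2 : ((((n - 1).toNat : ℕ) : ℤ) + 1) = n := by omega
      rw [h2]
      simp
  have hmain' : HasSum (fun n : ℤ => ((‖a n‖ ^ 2 : ℝ) : ℂ)) (((1 : ℝ) : ℂ)) := by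
    rw [Complex.ofReal_one]
    exact hmain.congr_fun fun n => by rw [hterm n]
  exact Complex.hasSum_ofReal.mp hmain'
end
end

section
/- Let φ ∈ L^∞(𝕋). If the slant H-Toeplitz operator V_φ is a partial isometry, i.e. V_φ V_φ* V_φ = V_φ, then (W P M_{1−|φ|²} W*) · (W P M_φ K) = 0 as an operator on H², where 1 − |φ|² ∈ L^∞(𝕋) and W* is restricted to H². -/
/- Abstract model of the setting of "Slant H-Toeplitz operators on the Hardy space":
`L2` is a complex Hilbert space with Hilbert basis `(e n)_{n ∈ ℤ}` (modelling `L²(𝕋)` with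
`e n = zⁿ`), `H2` is the closed linear span of `{e n : n ≥ 0}` (the Hardy space `H²`), with
`eH : ℕ → H2` the corresponding orthonormal basis of `H2`.  A symbol `φ ∈ L^∞(𝕋)` is encoded
by its multiplication (Laurent) operator `M = M_φ` on `L2`, characterised by its matrix
`⟪e i, M (e j)⟫ = a (i - j)` where `a n = φ̂(n) = ⟨φ, e n⟩` are the Fourier coefficients of `φ`;
note that a bounded operator with such a matrix is exactly a multiplication operator by an
`L^∞` function, that `‖M‖ = ‖φ‖_∞`, `M_φ* = M_{φ̄}`, and `φ = 0 ↔ a = 0`.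
`W` and `K` are the auxiliary operators with `W e_{2n} = e n`, `W e_{2n+1} = 0` (`n ∈ ℤ`) and
`K e_{2n} = e n`, `K e_{2n+1} = e_{-n-1}` (`n ≥ 0`), and `Submodule.orthogonalProjectionOnto H2` is `P`.
The slant H-Toeplitz operator `V_φ` is `W P M_φ K : H² → H²`.
(Matrix entries: the paper's `⟨f, g⟩ = ∫ f ḡ` is Mathlib's `⟪g, f⟫`, conjugate-linear in the
first slot, so the paper's matrix entry `⟨A e_j, e_i⟩` is `⟪e i, A (e j)⟫` here.) -/

open scoped ComplexInnerProductSpace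

noncomputable section

/-- If `V_φ` is a partial isometry, i.e. `V_φ V_φ* V_φ = V_φ`, then
`(W P M_{1-|φ|²} W*) (W P M_φ K) = 0`, where `M_{1-|φ|²} = I - M_φ* M_φ`. -/
theorem partial_isometry_consequence
    {L2 : Type*} [NormedAddCommGroup L2] [InnerProductSpace ℂ L2] [CompleteSpace L2]
    -- the orthonormal (Fourier) basis `e n ↔ zⁿ` of `L²(𝕋)`
    (e : HilbertBasis ℤ ℂ L2)
    -- the Hardy space `H²`, the closed linear span of `{e n : n ≥ 0}`
    (H2 : Submodule ℂ L2) [CompleteSpace H2]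
    (hH2 : H2 = (Submodule.span ℂ (Set.range fun n : ℕ => e (n : ℤ))).topologicalClosure)
    (eH : ℕ → H2) (heH : ∀ n : ℕ, (eH n : L2) = e (n : ℤ))
    -- the operator `W`: `W e_{2n} = e n`, `W e_{2n+1} = 0` for all `n ∈ ℤ`
    (W : L2 →L[ℂ] L2)
    (hW : ∀ n : ℤ, W (e (2 * n)) = e n ∧ W (e (2 * n + 1)) = 0)
    -- the operator `K : H² → L²`: `K e_{2n} = e n`, `K e_{2n+1} = e_{-n-1}` for all `n ≥ 0`
    (K : H2 →L[ℂ] L2)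
    (hK : ∀ n : ℕ, K (eH (2 * n)) = e (n : ℤ) ∧ K (eH (2 * n + 1)) = e (-(n : ℤ) - 1))
    -- `φ ∈ L^∞`, encoded by its Fourier coefficients `a` and multiplication operator `M = M_φ`
    (a : ℤ → ℂ) (M : L2 →L[ℂ] L2)
    (hM : ∀ i j : ℤ, ⟪e i, M (e j)⟫ = a (i - j))
    -- the slant H-Toeplitz operator `V_φ = W P M_φ K : H² → H²`
    (V : H2 →L[ℂ] H2)
    (hV : ∀ f : H2, (V f : L2) = W ↑(Submodule.orthogonalProjectionOnto H2 (M (K f))))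
    (hpi : V.comp ((ContinuousLinearMap.adjoint V).comp V) = V) :
    ∀ f : H2,
      W ↑(Submodule.orthogonalProjectionOnto H2
        ((ContinuousLinearMap.id ℂ L2 - (ContinuousLinearMap.adjoint M).comp M)
          (ContinuousLinearMap.adjoint W ((V f : L2))))) = 0 := by

  classical
  set W' := ContinuousLinearMap.adjoint W with hW'def
  set M' := ContinuousLinearMap.adjoint M with hM'def
  set K' := ContinuousLinearMap.adjoint K with hK'def
  have hON : ∀ i j : ℤ, ⟪e i, e j⟫ = if i = j then (1:ℂ) else 0 :=
    orthonormal_iff_ite.mp e.orthonormal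
  -- extensionality via the Hilbert basis
  have hx : ∀ x y : L2, (∀ i : ℤ, ⟪e i, x⟫ = ⟪e i, y⟫) → x = y := by
    intro x y h
    apply e.repr.injective
    ext i
    rw [e.repr_apply_apply, e.repr_apply_apply, h]
  have hdense : Dense (Submodule.span ℂ (Set.range (e : ℤ → L2)) : Set L2) := by
    rw [dense_iff_closure_eq, ← Submodule.topologicalClosure_coe, e.dense_span,
      Submodule.top_coe]
  -- W adjoint on basis vectors
  have hWadj : ∀ n : ℤ, W' (e n) = e (2 * n) := by
    intro n
    apply hx
    intro i
    rw [hW'def, ContinuousLinearMap.adjoint_inner_right]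
    rcases Int.even_or_odd i with ⟨k, hk⟩ | ⟨k, hk⟩
    · have hk' : i = 2 * k := by omega
      rw [hk', (hW k).1, hON, hON]
      by_cases h : k = n
      · simp [h]
      · rw [if_neg h, if_neg (by omega)]
    · have hk' : i = 2 * k + 1 := by omega
      rw [hk', (hW k).2, hON, if_neg (by omega), inner_zero_left]
  have hWW' : ∀ x : L2, W (W' x) = x := by
    have : W.comp W' = ContinuousLinearMap.id ℂ L2 := by
      apply ContinuousLinearMap.ext_on hdense
      rintro _ ⟨n, rfl⟩
      simp only [ContinuousLinearMap.coe_comp', Function.comp_apply,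
        ContinuousLinearMap.id_apply, hWadj, (hW n).1]
    intro x
    calc W (W' x) = (W.comp W') x := rfl
      _ = x := by rw [this]; rfl
  -- membership facts
  have hmemH2 : ∀ n : ℕ, (e (n : ℤ)) ∈ H2 := by
    intro n
    rw [hH2]
    exact Submodule.le_topologicalClosure _ (Submodule.subset_span ⟨n, rfl⟩)
  have hP : ∀ x ∈ H2, ((Submodule.orthogonalProjectionOnto H2 x : L2)) = x := by
    intro x hxm
    exact Submodule.starProjection_eq_self_iff.mpr hxm
  have hPsa : ∀ x y : L2, ⟪(Submodule.orthogonalProjectionOnto H2 x : L2), y⟫ =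
      ⟪x, (Submodule.orthogonalProjectionOnto H2 y : L2)⟫ :=
    fun x y => Submodule.inner_starProjection_left_eq_right H2 x y
  have hW'H2 : ∀ x ∈ H2, W' x ∈ H2 := by
    have hle : H2 ≤ (H2.comap (W' : L2 →ₗ[ℂ] L2) : Submodule ℂ L2) := by
      nth_rewrite 1 [hH2]
      apply Submodule.topologicalClosure_minimal
      · rw [Submodule.span_le]
        rintro _ ⟨n, rfl⟩
        simp only [SetLike.mem_coe, Submodule.mem_comap, ContinuousLinearMap.coe_coe]
        rw [hWadj]
        have : (2 : ℤ) * (n : ℤ) = ((2 * n : ℕ) : ℤ) := by push_cast; ring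
        rw [this]
        exact hmemH2 _
      · have : IsClosed ((H2 : Set L2)) := by
          rw [hH2]; exact Submodule.isClosed_topologicalClosure _
        exact this.preimage W'.continuous
    intro x hxm
    exact hle hxm
  -- M commutes with its adjoint
  have h1 : ∀ x : L2, M' (M x) = M (M' x) := by
    have : M'.comp M = M.comp M' := by
      apply ContinuousLinearMap.ext_on hdense
      rintro _ ⟨j, rfl⟩
      apply hx
      intro i
      have hL : ⟪e i, (M'.comp M) (e j)⟫ = ∑' k, (starRingEnd ℂ) (a (k - i)) * a (k - j) := by
        rw [ContinuousLinearMap.comp_apply, hM'def, ContinuousLinearMap.adjoint_inner_right,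
          ← e.tsum_inner_mul_inner (M (e i)) (M (e j))]
        congr 1
        funext k
        rw [← inner_conj_symm (M (e i)) (e k), hM, hM]
      have hR : ⟪e i, (M.comp M') (e j)⟫ = ∑' k, a (i - k) * (starRingEnd ℂ) (a (j - k)) := by
        rw [ContinuousLinearMap.comp_apply, ← ContinuousLinearMap.adjoint_inner_left M,
          ← hM'def, ← e.tsum_inner_mul_inner (M' (e i)) (M' (e j))]
        congr 1
        funext k
        rw [hM'def, ContinuousLinearMap.adjoint_inner_left, ContinuousLinearMap.adjoint_inner_right,
          hM, ← inner_conj_symm (M (e k)) (e j), hM]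
      rw [hL, hR]
      have := (Equiv.subLeft (i + j)).tsum_eq
        (fun k => a (i - k) * (starRingEnd ℂ) (a (j - k)))
      rw [← this]
      congr 1
      funext k
      simp only [Equiv.subLeft_apply]
      rw [show i - (i + j - k) = k - j from by ring, show j - (i + j - k) = k - i from by ring]
      ring
    intro x
    calc M' (M x) = (M'.comp M) x := rfl
      _ = (M.comp M') x := by rw [this]
      _ = M (M' x) := rfl
  -- extensionality in H2 via eH
  have hxH : ∀ x : H2, (∀ i : ℕ, ⟪e (i : ℤ), (x : L2)⟫ = 0) → x = 0 := by
    intro x h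
    have hspan : ∀ y ∈ Submodule.span ℂ (Set.range fun n : ℕ => e (n : ℤ)),
        ⟪y, (x : L2)⟫ = 0 := by
      intro y hy
      induction hy using Submodule.span_induction with
      | mem y hy => obtain ⟨n, rfl⟩ := hy; exact h n
      | zero => simp
      | add y z _ _ hy hz => rw [inner_add_left, hy, hz, add_zero]
      | smul c y _ hy => rw [inner_smul_left, hy, mul_zero]
    have hclosed : IsClosed {y : L2 | ⟪y, (x : L2)⟫ = 0} :=
      isClosed_eq (continuous_id.inner continuous_const) continuous_const
    have hxmem : (x : L2) ∈ closure
        ((Submodule.span ℂ (Set.range fun n : ℕ => e (n : ℤ))) : Set L2) := by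
      have hm : (x : L2) ∈
          (((Submodule.span ℂ (Set.range fun n : ℕ => e (n : ℤ))).topologicalClosure :
            Submodule ℂ L2) : Set L2) := by
        rw [← hH2]; exact x.2
      rwa [Submodule.topologicalClosure_coe] at hm
    have : ⟪(x : L2), (x : L2)⟫ = 0 := by
      have hsub : ((Submodule.span ℂ (Set.range fun n : ℕ => e (n : ℤ))) : Set L2) ⊆
          {y : L2 | ⟪y, (x : L2)⟫ = 0} := fun y hy => hspan y hy
      exact (hclosed.closure_subset_iff.mpr hsub) hxmem
    have : (x : L2) = 0 := inner_self_eq_zero.mp this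
    exact Subtype.ext this
  have hxH' : ∀ x y : H2, (∀ i : ℕ, ⟪e (i : ℤ), (x : L2)⟫ = ⟪e (i : ℤ), (y : L2)⟫) → x = y := by
    intro x y h
    have := hxH (x - y) (by
      intro i
      rw [Submodule.coe_sub, inner_sub_right, h, sub_self])
    rwa [sub_eq_zero] at this
  -- inner products of eH
  have heHinner : ∀ (i : ℕ) (z : L2), ⟪(eH i : L2), z⟫ = ⟪e (i : ℤ), z⟫ := by
    intro i z; rw [heH]
  -- K K' = 1
  have hKK'basis : ∀ n : ℤ, K (K' (e n)) = e n := by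
    intro n
    have hKinner : ∀ i : ℕ, ⟪e (i : ℤ), (K' (e n) : L2)⟫ = ⟪K (eH i), e n⟫ := by
      intro i
      rw [← heH]
      have : ⟪eH i, K' (e n)⟫ = ⟪K (eH i), e n⟫ := by
        rw [hK'def, ContinuousLinearMap.adjoint_inner_right]
      rw [← this]
      rfl
    by_cases hn : 0 ≤ n
    · have hc : K' (e n) = eH (2 * n.toNat) := by
        apply hxH'
        intro i
        rw [hKinner, heH]
        rcases Nat.even_or_odd i with ⟨k, hk⟩ | ⟨k, hk⟩
        · have hk' : i = 2 * k := by omega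
          rw [hk', (hK k).1, hON, hON]
          by_cases h : (k : ℤ) = n
          · rw [if_pos h, if_pos (by omega)]
          · rw [if_neg h, if_neg (by omega)]
        · have hk' : i = 2 * k + 1 := by omega
          rw [hk', (hK k).2, hON, hON, if_neg (by omega), if_neg (by omega)]
      rw [hc, (hK _).1]
      congr 1
      omega
    · have hc : K' (e n) = eH (2 * (-n - 1).toNat + 1) := by
        apply hxH'
        intro i
        rw [hKinner, heH]
        rcases Nat.even_or_odd i with ⟨k, hk⟩ | ⟨k, hk⟩
        · have hk' : i = 2 * k := by omega
          rw [hk', (hK k).1, hON, hON, if_neg (by omega), if_neg (by omega)]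
        · have hk' : i = 2 * k + 1 := by omega
          rw [hk', (hK k).2, hON, hON]
          by_cases h : -(k : ℤ) - 1 = n
          · rw [if_pos h, if_pos (by omega)]
          · rw [if_neg h, if_neg (by omega)]
      rw [hc, (hK _).2]
      congr 1
      omega
  have hKK' : ∀ x : L2, K (K' x) = x := by
    have : K.comp K' = ContinuousLinearMap.id ℂ L2 := by
      apply ContinuousLinearMap.ext_on hdense
      rintro _ ⟨n, rfl⟩
      simpa using hKK'basis n
    intro x
    calc K (K' x) = (K.comp K') x := rfl
      _ = x := by rw [this]; rfl
  -- formula for the adjoint of V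
  have hVadj : ∀ g : H2, (ContinuousLinearMap.adjoint V) g =
      K' (M' ((Submodule.orthogonalProjectionOnto H2 (W' (g : L2))) : L2)) := by
    intro g
    apply ext_inner_left ℂ
    intro f'
    rw [ContinuousLinearMap.adjoint_inner_right]
    have e1 : ⟪V f', g⟫ = ⟪(V f' : L2), (g : L2)⟫ := rfl
    have e2 : ⟪f', K' (M' ((Submodule.orthogonalProjectionOnto H2 (W' (g : L2))) : L2))⟫ =
        ⟪K f', M' ((Submodule.orthogonalProjectionOnto H2 (W' (g : L2))) : L2)⟫ := by
      rw [hK'def, ContinuousLinearMap.adjoint_inner_right]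
    rw [e1, e2, hV, hM'def, ContinuousLinearMap.adjoint_inner_right]
    rw [show ⟪(W ((Submodule.orthogonalProjectionOnto H2 (M (K f'))) : L2)), (g : L2)⟫
        = ⟪((Submodule.orthogonalProjectionOnto H2 (M (K f'))) : L2), W' (g : L2)⟫ from
      (ContinuousLinearMap.adjoint_inner_right W _ _).symm]
    rw [hPsa]
  -- the key identity from the partial isometry hypothesis
  intro f
  set g : H2 := V f with hgdef
  have hgH2 : (g : L2) ∈ H2 := g.2
  have hW'g : W' (g : L2) ∈ H2 := hW'H2 _ hgH2
  have key : W ((Submodule.orthogonalProjectionOnto H2 (M (M' (W' (g : L2))))) : L2) = (g : L2) := by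
    have hpi' : V ((ContinuousLinearMap.adjoint V) g) = g := by
      have := congrArg (fun T => T f) hpi
      simpa [ContinuousLinearMap.comp_apply, hgdef] using this
    have : ((V ((ContinuousLinearMap.adjoint V) g)) : L2) = (g : L2) := by
      rw [hpi']
    rw [hV, hVadj, hKK'] at this
    rwa [hP _ hW'g] at this
  have hsub : ((ContinuousLinearMap.id ℂ L2 - M'.comp M) (W' ((g : L2))))
      = W' (g : L2) - M (M' (W' (g : L2))) := by
    rw [ContinuousLinearMap.sub_apply, ContinuousLinearMap.id_apply,
      ContinuousLinearMap.comp_apply, h1]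
  rw [hsub]
  rw [map_sub (Submodule.orthogonalProjectionOnto H2), Submodule.coe_sub, map_sub]
  rw [hP _ hW'g, hWW', key, sub_self]
end
end

section
/- For φ ∈ L^∞(𝕋), the slant H-Toeplitz operator V_φ is a compact operator on H² if and only if φ = 0. -/
/- Abstract model of the setting of "Slant H-Toeplitz operators on the Hardy space":
`L2` is a complex Hilbert space with Hilbert basis `(e n)_{n ∈ ℤ}` (modelling `L²(𝕋)` with
`e n = zⁿ`), `H2` is the closed linear span of `{e n : n ≥ 0}` (the Hardy space `H²`), with
`eH : ℕ → H2` the corresponding orthonormal basis of `H2`.  A symbol `φ ∈ L^∞(𝕋)` is encoded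
by its multiplication (Laurent) operator `M = M_φ` on `L2`, characterised by its matrix
`⟪e i, M (e j)⟫ = a (i - j)` where `a n = φ̂(n) = ⟨φ, e n⟩` are the Fourier coefficients of `φ`;
note that a bounded operator with such a matrix is exactly a multiplication operator by an
`L^∞` function, that `‖M‖ = ‖φ‖_∞`, `M_φ* = M_{φ̄}`, and `φ = 0 ↔ a = 0`.
`W` and `K` are the auxiliary operators with `W e_{2n} = e n`, `W e_{2n+1} = 0` (`n ∈ ℤ`) and
`K e_{2n} = e n`, `K e_{2n+1} = e_{-n-1}` (`n ≥ 0`), and `orthogonalProjection H2` is `P`.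
The slant H-Toeplitz operator `V_φ` is `W P M_φ K : H² → H²`.
(Matrix entries: the paper's `⟨f, g⟩ = ∫ f ḡ` is Mathlib's `⟪g, f⟫`, conjugate-linear in the
first slot, so the paper's matrix entry `⟨A e_j, e_i⟩` is `⟪e i, A (e j)⟫` here.) -/

open scoped ComplexInnerProductSpace

noncomputable section

/-- `V_φ` is a compact operator on `H²` if and only if `φ = 0`. -/
theorem compact_iff_zero
    {L2 : Type*} [NormedAddCommGroup L2] [InnerProductSpace ℂ L2] [CompleteSpace L2]
    -- the orthonormal (Fourier) basis `e n ↔ zⁿ` of `L²(𝕋)`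
    (e : HilbertBasis ℤ ℂ L2)
    -- the Hardy space `H²`, the closed linear span of `{e n : n ≥ 0}`
    (H2 : Submodule ℂ L2) [CompleteSpace H2]
    (hH2 : H2 = (Submodule.span ℂ (Set.range fun n : ℕ => e (n : ℤ))).topologicalClosure)
    (eH : ℕ → H2) (heH : ∀ n : ℕ, (eH n : L2) = e (n : ℤ))
    -- the operator `W`: `W e_{2n} = e n`, `W e_{2n+1} = 0` for all `n ∈ ℤ`
    (W : L2 →L[ℂ] L2)
    (hW : ∀ n : ℤ, W (e (2 * n)) = e n ∧ W (e (2 * n + 1)) = 0)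
    -- the operator `K : H² → L²`: `K e_{2n} = e n`, `K e_{2n+1} = e_{-n-1}` for all `n ≥ 0`
    (K : H2 →L[ℂ] L2)
    (hK : ∀ n : ℕ, K (eH (2 * n)) = e (n : ℤ) ∧ K (eH (2 * n + 1)) = e (-(n : ℤ) - 1))
    -- `φ ∈ L^∞`, encoded by its Fourier coefficients `a` and multiplication operator `M = M_φ`
    (a : ℤ → ℂ) (M : L2 →L[ℂ] L2)
    (hM : ∀ i j : ℤ, ⟪e i, M (e j)⟫ = a (i - j))
    -- the slant H-Toeplitz operator `V_φ = W P M_φ K : H² → H²`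
    (V : H2 →L[ℂ] H2)
    (hV : ∀ f : H2, (V f : L2) = W ↑(H2.orthogonalProjectionOnto (M (K f))))
 :
    IsCompactOperator ⇑V ↔ a = 0 := by
  have heite : ∀ i j : ℤ, ⟪(e i : L2), e j⟫ = if i = j then 1 else 0 :=
    fun i j => orthonormal_iff_ite.mp e.orthonormal i j
  -- a vector is determined by its inner products against the basis
  have hext : ∀ x : L2, (∀ i : ℤ, ⟪(e i : L2), x⟫ = 0) → x = 0 := by
    intro x hx
    have h := e.hasSum_repr x
    simp only [HilbertBasis.repr_apply_apply, hx, zero_smul] at h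
    exact h.unique hasSum_zero
  -- basis vectors with nonnegative index lie in H2
  have hmem : ∀ n : ℕ, (e (n : ℤ) : L2) ∈ H2 := by
    intro n
    rw [hH2]
    exact Submodule.le_topologicalClosure _ (Submodule.subset_span ⟨n, rfl⟩)
  -- inner products with elements of H2 see through the projection
  have hproj : ∀ u : L2, u ∈ H2 → ∀ v : L2,
      ⟪u, ((H2.orthogonalProjectionOnto v : H2) : L2)⟫ = ⟪u, v⟫ := by
    intro u hu v
    have h0 : ⟪v - ((H2.orthogonalProjectionOnto v : H2) : L2), u⟫ = 0 :=
      by rw [← Submodule.starProjection_apply]; exact H2.starProjection_inner_eq_zero v u hu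
    have h0' : ⟪u, v - ((H2.orthogonalProjectionOnto v : H2) : L2)⟫ = 0 := by
      rw [← inner_conj_symm, h0, map_zero]
    rw [inner_sub_right, sub_eq_zero] at h0'
    exact h0'.symm
  -- the adjoint of W
  have hWadj : ∀ p : ℤ, (ContinuousLinearMap.adjoint W) (e p) = e (2 * p) := by
    intro p
    have key : ∀ i : ℤ,
        ⟪(e i : L2), (ContinuousLinearMap.adjoint W) (e p) - e (2 * p)⟫ = 0 := by
      intro i
      rw [inner_sub_right]
      have h1 : ⟪(e i : L2), (ContinuousLinearMap.adjoint W) (e p)⟫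
          = (starRingEnd ℂ) ⟪(e p : L2), W (e i)⟫ := by
        rw [← inner_conj_symm, ContinuousLinearMap.adjoint_inner_left]
      rcases Int.even_or_odd i with ⟨m, hm⟩ | ⟨m, hm⟩
      · have hi : i = 2 * m := by omega
        subst hi
        rw [h1, (hW m).1, heite, heite]
        by_cases h : p = m
        · simp [h]
        · have h2 : ¬ (2 * m = 2 * p) := by omega
          simp [h, h2]
      · have hi : i = 2 * m + 1 := by omega
        subst hi
        rw [h1, (hW m).2, heite]
        have h2 : ¬ (2 * m + 1 = 2 * p) := by omega
        simp [h2]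
    have := hext _ key
    rw [sub_eq_zero] at this
    exact this
  have hWinner : ∀ (p : ℤ) (x : L2), ⟪(e p : L2), W x⟫ = ⟪(e (2 * p) : L2), x⟫ := by
    intro p x
    rw [← ContinuousLinearMap.adjoint_inner_left, hWadj]
  -- matrix entries of V
  have hMat : ∀ p n : ℕ, ⟪eH p, V (eH (2 * n))⟫ = a (2 * (p : ℤ) - (n : ℤ)) := by
    intro p n
    have hcoe : ⟪eH p, V (eH (2 * n))⟫ = ⟪(eH p : L2), ((V (eH (2 * n)) : H2) : L2)⟫ := rfl
    rw [hcoe, heH, hV, (hK n).1, hWinner]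
    have h2 : (e (2 * (p : ℤ)) : L2) ∈ H2 := by
      have := hmem (2 * p)
      rwa [show ((2 * p : ℕ) : ℤ) = 2 * (p : ℤ) by push_cast; ring] at this
    rw [hproj _ h2, hM]
  -- eH is an orthonormal family
  have heHo : Orthonormal ℂ eH := by
    rw [orthonormal_iff_ite]
    intro i j
    have hc : ⟪eH i, eH j⟫ = ⟪(e (i : ℤ) : L2), e (j : ℤ)⟫ := by
      rw [← heH, ← heH]; rfl
    rw [hc, heite]
    simp [Int.natCast_inj]
  have hnorm1 : ∀ n : ℕ, ‖eH n‖ = 1 := fun n => heHo.1 n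
  -- weak convergence of orthonormal sequences (Bessel)
  have hweak : ∀ x : H2,
      Filter.Tendsto (fun n : ℕ => ⟪x, eH n⟫) Filter.atTop (nhds 0) := by
    intro x
    have hs : Summable fun n : ℕ => ‖⟪eH n, x⟫‖ ^ 2 := heHo.inner_products_summable x
    have h0 : Filter.Tendsto (fun n => ‖⟪eH n, x⟫‖ ^ 2) Filter.atTop (nhds 0) :=
      hs.tendsto_atTop_zero
    have h1 : Filter.Tendsto (fun n => ‖⟪x, eH n⟫‖) Filter.atTop (nhds 0) := by
      have hsq := (Real.continuous_sqrt.tendsto 0).comp h0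
      simp only [Real.sqrt_zero] at hsq
      convert hsq using 2 with n
      simp only [Function.comp_apply]
      rw [← norm_inner_symm, Real.sqrt_sq (norm_nonneg _)]
    exact tendsto_zero_iff_norm_tendsto_zero.mpr h1
  constructor
  · -- compact implies a = 0
    intro hc
    funext k
    show a k = 0
    set m : ℕ → ℕ := fun p => p + k.natAbs with hm
    have hNnn : ∀ p : ℕ, (0 : ℤ) ≤ 2 * (m p : ℤ) - k := by
      intro p
      have h2 : (m p : ℤ) = (p : ℤ) + (k.natAbs : ℤ) := by simp [hm]
      have hk := Int.le_natAbs (a := k)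
      omega
    set N : ℕ → ℕ := fun p => (2 * (m p : ℤ) - k).toNat with hN
    have hNk : ∀ p, (N p : ℤ) = 2 * (m p : ℤ) - k := fun p => Int.toNat_of_nonneg (hNnn p)
    have hak : ∀ p : ℕ, ⟪eH (m p), V (eH (2 * N p))⟫ = a k := by
      intro p; rw [hMat]; congr 1; rw [hNk]; ring
    obtain ⟨C, hC, hCmem⟩ := hc
    obtain ⟨ε, hε, hball⟩ := Metric.mem_nhds_iff.mp hCmem
    set c : ℝ := ε / 2 with hcdef
    have hcpos : 0 < c := by positivity
    set g : ℕ → H2 := fun p => (c : ℂ) • eH (2 * N p) with hg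
    have hgnorm : ∀ p, ‖g p‖ = c := by
      intro p
      simp only [hg, norm_smul, Complex.norm_real, hnorm1, mul_one,
        Real.norm_eq_abs, abs_of_pos hcpos]
    have hgC : ∀ p, V (g p) ∈ C := by
      intro p
      apply hball
      rw [Metric.mem_ball, dist_zero_right, hgnorm]
      simp only [hcdef]; linarith
    obtain ⟨y, -, φ, hφ, hconv⟩ := hC.tendsto_subseq hgC
    have h2N : Filter.Tendsto (fun p => 2 * N p) Filter.atTop Filter.atTop := by
      apply Filter.tendsto_atTop_mono (fun p => ?_) Filter.tendsto_id
      have h := hNk p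
      have h2 : (m p : ℤ) = (p : ℤ) + (k.natAbs : ℤ) := by simp [hm]
      have hk := Int.le_natAbs (a := k)
      clear_value N m
      simp only [id_eq]
      omega
    have hweak2 : ∀ z : H2,
        Filter.Tendsto (fun p => ⟪z, V (g p)⟫) Filter.atTop (nhds 0) := by
      intro z
      have h1 : ∀ p, ⟪z, V (g p)⟫
          = (c : ℂ) * ⟪(ContinuousLinearMap.adjoint V) z, eH (2 * N p)⟫ := by
        intro p
        rw [← ContinuousLinearMap.adjoint_inner_left]
        simp only [hg]
        rw [inner_smul_right]
      simp only [h1]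
      have h2 := ((hweak ((ContinuousLinearMap.adjoint V) z)).comp h2N).const_mul ((c : ℂ))
      simpa using h2
    have hy0 : y = 0 := by
      have hzero : ∀ z : H2, ⟪z, y⟫ = 0 := by
        intro z
        have h1 : Filter.Tendsto (fun j => ⟪z, V (g (φ j))⟫) Filter.atTop (nhds ⟪z, y⟫) :=
          tendsto_const_nhds.inner hconv
        have h2 : Filter.Tendsto (fun j => ⟪z, V (g (φ j))⟫) Filter.atTop (nhds 0) :=
          (hweak2 z).comp hφ.tendsto_atTop
        exact tendsto_nhds_unique h1 h2
      exact inner_self_eq_zero.mp (hzero y)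
    have hnorm0 : Filter.Tendsto (fun j => ‖V (g (φ j))‖) Filter.atTop (nhds 0) := by
      rw [hy0] at hconv
      simpa using hconv.norm
    have hlb : ∀ j, c * ‖a k‖ ≤ ‖V (g (φ j))‖ := by
      intro j
      have h1 : ⟪eH (m (φ j)), V (g (φ j))⟫ = (c : ℂ) * a k := by
        have : V (g (φ j)) = (c : ℂ) • V (eH (2 * N (φ j))) := by
          rw [hg]; exact map_smul V _ _
        rw [this, inner_smul_right, hak]
      have h2 := norm_inner_le_norm (𝕜 := ℂ) (eH (m (φ j))) (V (g (φ j)))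
      rw [h1, hnorm1, one_mul] at h2
      calc c * ‖a k‖ = ‖(c : ℂ) * a k‖ := by
            rw [norm_mul, Complex.norm_real, Real.norm_eq_abs, abs_of_pos hcpos]
        _ ≤ ‖V (g (φ j))‖ := h2
    have hfin : c * ‖a k‖ ≤ 0 :=
      ge_of_tendsto hnorm0 (Filter.Eventually.of_forall hlb)
    have : ‖a k‖ = 0 := by nlinarith [norm_nonneg (a k)]
    exact norm_eq_zero.mp this
  · -- a = 0 implies V = 0, which is compact
    intro ha
    have hMe : ∀ j : ℤ, M (e j) = 0 := by
      intro j
      apply hext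
      intro i
      rw [hM]
      simp [ha]
    have hM0 : ∀ x : L2, M x = 0 := by
      intro x
      have h := (e.hasSum_repr x).mapL M
      simp only [map_smul, hMe, smul_zero] at h
      exact h.unique hasSum_zero
    have hV0 : ⇑V = fun _ => (0 : H2) := by
      funext f
      have hcoe : (V f : L2) = 0 := by
        rw [hV, hM0]
        simp
      exact_mod_cast hcoe
    rw [hV0]
    exact isCompactOperator_zero
end
end

section
/- For φ ∈ L^∞(𝕋), the slant H-Toeplitz operator V_φ is hyponormal, i.e. ‖V_φ* f‖ ≤ ‖V_φ f‖ for all f ∈ H², if and only if φ = 0. -/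
/- Abstract model of the setting of "Slant H-Toeplitz operators on the Hardy space":
`L2` is a complex Hilbert space with Hilbert basis `(e n)_{n ∈ ℤ}` (modelling `L²(𝕋)` with
`e n = zⁿ`), `H2` is the closed linear span of `{e n : n ≥ 0}` (the Hardy space `H²`), with
`eH : ℕ → H2` the corresponding orthonormal basis of `H2`.  A symbol `φ ∈ L^∞(𝕋)` is encoded
by its multiplication (Laurent) operator `M = M_φ` on `L2`, characterised by its matrix
`⟪e i, M (e j)⟫ = a (i - j)` where `a n = φ̂(n) = ⟨φ, e n⟩` are the Fourier coefficients of `φ`;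
note that a bounded operator with such a matrix is exactly a multiplication operator by an
`L^∞` function, that `‖M‖ = ‖φ‖_∞`, `M_φ* = M_{φ̄}`, and `φ = 0 ↔ a = 0`.
`W` and `K` are the auxiliary operators with `W e_{2n} = e n`, `W e_{2n+1} = 0` (`n ∈ ℤ`) and
`K e_{2n} = e n`, `K e_{2n+1} = e_{-n-1}` (`n ≥ 0`), and `orthogonalProjection H2` is `P`.
The slant H-Toeplitz operator `V_φ` is `W P M_φ K : H² → H²`.
(Matrix entries: the paper's `⟨f, g⟩ = ∫ f ḡ` is Mathlib's `⟪g, f⟫`, conjugate-linear in the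
first slot, so the paper's matrix entry `⟨A e_j, e_i⟩` is `⟪e i, A (e j)⟫` here.) -/

open scoped ComplexInnerProductSpace

noncomputable section

set_option maxHeartbeats 1000000 in
/-- `V_φ` is hyponormal, i.e. `‖V_φ* f‖ ≤ ‖V_φ f‖` for all `f ∈ H²`,
if and only if `φ = 0`. -/
theorem hyponormal_iff_zero
    {L2 : Type*} [NormedAddCommGroup L2] [InnerProductSpace ℂ L2] [CompleteSpace L2]
    -- the orthonormal (Fourier) basis `e n ↔ zⁿ` of `L²(𝕋)`
    (e : HilbertBasis ℤ ℂ L2)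
    -- the Hardy space `H²`, the closed linear span of `{e n : n ≥ 0}`
    (H2 : Submodule ℂ L2) [CompleteSpace H2]
    (hH2 : H2 = (Submodule.span ℂ (Set.range fun n : ℕ => e (n : ℤ))).topologicalClosure)
    (eH : ℕ → H2) (heH : ∀ n : ℕ, (eH n : L2) = e (n : ℤ))
    -- the operator `W`: `W e_{2n} = e n`, `W e_{2n+1} = 0` for all `n ∈ ℤ`
    (W : L2 →L[ℂ] L2)
    (hW : ∀ n : ℤ, W (e (2 * n)) = e n ∧ W (e (2 * n + 1)) = 0)
    -- the operator `K : H² → L²`: `K e_{2n} = e n`, `K e_{2n+1} = e_{-n-1}` for all `n ≥ 0`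
    (K : H2 →L[ℂ] L2)
    (hK : ∀ n : ℕ, K (eH (2 * n)) = e (n : ℤ) ∧ K (eH (2 * n + 1)) = e (-(n : ℤ) - 1))
    -- `φ ∈ L^∞`, encoded by its Fourier coefficients `a` and multiplication operator `M = M_φ`
    (a : ℤ → ℂ) (M : L2 →L[ℂ] L2)
    (hM : ∀ i j : ℤ, ⟪e i, M (e j)⟫ = a (i - j))
    -- the slant H-Toeplitz operator `V_φ = W P M_φ K : H² → H²`
    (V : H2 →L[ℂ] H2)
    (hV : ∀ f : H2, (V f : L2) = W ↑(Submodule.orthogonalProjectionOnto H2 (M (K f))))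
 :
    (∀ f : H2, ‖ContinuousLinearMap.adjoint V f‖ ≤ ‖V f‖) ↔ a = 0 := by
  classical
  have heq : ∀ i j : ℤ, ⟪e i, e j⟫ = if i = j then (1:ℂ) else 0 :=
    orthonormal_iff_ite.mp e.orthonormal
  -- extensionality via the Hilbert basis
  have ext0 : ∀ x : L2, (∀ i : ℤ, ⟪e i, x⟫ = 0) → x = 0 := by
    intro x hx
    have h := e.hasSum_repr x
    have hf : (fun i : ℤ => e.repr x i • e i) = fun _ => (0 : L2) :=
      funext fun i => by rw [e.repr_apply_apply, hx i, zero_smul]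
    rw [hf] at h
    exact h.unique hasSum_zero
  -- adjoint of W
  have Wadj : ∀ i : ℤ, ContinuousLinearMap.adjoint W (e i) = e (2 * i) := by
    intro i
    have h : ∀ j : ℤ, ⟪e j, ContinuousLinearMap.adjoint W (e i) - e (2 * i)⟫ = 0 := by
      intro j
      rw [inner_sub_right, ContinuousLinearMap.adjoint_inner_right]
      rcases Int.even_or_odd j with ⟨k, hk⟩ | ⟨k, hk⟩
      · have hk2 : j = 2 * k := by omega
        subst hk2
        rw [(hW k).1, heq, heq]
        by_cases h : k = i
        · simp [h]
        · have h2 : ¬ (2 * k = 2 * i) := by omega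
          simp [h, h2]
      · have hk2 : j = 2 * k + 1 := by omega
        subst hk2
        rw [(hW k).2, heq]
        have h2 : ¬ (2 * k + 1 = 2 * i) := by omega
        simp [h2]
    exact sub_eq_zero.mp (ext0 _ h)
  -- membership of basis vectors in H2
  have hmem : ∀ m : ℕ, e (m : ℤ) ∈ H2 := by
    intro m
    rw [hH2]
    exact Submodule.le_topologicalClosure _ (Submodule.subset_span ⟨m, rfl⟩)
  -- inner products with the projection
  have key : ∀ (i : ℤ), e i ∈ H2 → ∀ y : L2,
      ⟪e i, (↑(Submodule.orthogonalProjectionOnto H2 y) : L2)⟫ = ⟪e i, y⟫ := by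
    intro i hi y
    have h := Submodule.inner_orthogonalProjectionOnto_eq_of_mem_left (K := H2) (⟨e i, hi⟩ : H2) y
    rw [Submodule.coe_inner] at h
    exact h
  -- `eH` is an orthonormal family
  have honH : Orthonormal ℂ eH := by
    rw [orthonormal_iff_ite]
    intro i j
    have h : ⟪eH i, eH j⟫ = ⟪(eH i : L2), (eH j : L2)⟫ := rfl
    rw [h, heH, heH, heq]
    simp [Int.natCast_inj]
  -- dense span
  have hspan : ⊤ ≤ (Submodule.span ℂ (Set.range eH)).topologicalClosure := by
    intro y _
    have hy2 : (y : L2) ∈ (Submodule.span ℂ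
        (Set.range fun n : ℕ => e (n : ℤ))).topologicalClosure := by
      rw [← hH2]; exact y.2
    have hyL : (y : L2) ∈ closure
        ((Submodule.span ℂ (Set.range fun n : ℕ => e (n : ℤ))) : Set L2) := hy2
    have himg : (Subtype.val '' ((Submodule.span ℂ (Set.range eH) : Submodule ℂ H2) : Set H2))
        = ((Submodule.span ℂ (Set.range fun n : ℕ => e (n : ℤ))) : Set L2) := by
      have h1 : Subtype.val '' ((Submodule.span ℂ (Set.range eH) : Submodule ℂ H2) : Set H2)
          = ((Submodule.map H2.subtype (Submodule.span ℂ (Set.range eH))) : Set L2) := rfl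
      have h2 : ⇑H2.subtype '' Set.range eH = Set.range fun n : ℕ => e (n : ℤ) := by
        ext x
        simp only [Set.mem_image, Set.mem_range]
        constructor
        · rintro ⟨_, ⟨nn, rfl⟩, rfl⟩
          exact ⟨nn, (heH nn).symm⟩
        · rintro ⟨nn, rfl⟩
          exact ⟨eH nn, ⟨nn, rfl⟩, heH nn⟩
      rw [h1, Submodule.map_span, h2]
    show y ∈ closure ((Submodule.span ℂ (Set.range eH) : Submodule ℂ H2) : Set H2)
    rw [closure_subtype, himg]
    exact hyL
  set fB : HilbertBasis ℕ ℂ H2 := HilbertBasis.mk honH hspan with hfBdef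
  have hfB : ∀ m : ℕ, fB m = eH m := fun m => by
    rw [hfBdef, HilbertBasis.coe_mk]
  -- matrix entries
  have entry : ∀ (m : ℕ) (f : H2), ⟪fB m, V f⟫ = ⟪e (2 * (m : ℤ)), M (K f)⟫ := by
    intro m f
    have h1 : ⟪fB m, V f⟫ = ⟪((fB m : H2) : L2), ((V f : H2) : L2)⟫ := rfl
    rw [h1, hfB, heH, hV, ← ContinuousLinearMap.adjoint_inner_left, Wadj]
    have hm2 : e (2 * (m : ℤ)) ∈ H2 := by
      have := hmem (2 * m)
      push_cast at this
      exact this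
    rw [key _ hm2]
  have E1 : ∀ m k : ℕ, ⟪fB m, V (eH (2 * k))⟫ = a (2 * (m : ℤ) - k) := by
    intro m k
    rw [entry, (hK k).1, hM]
  have E2 : ∀ m k : ℕ, ⟪fB m, V (eH (2 * k + 1))⟫ = a (2 * (m : ℤ) + k + 1) := by
    intro m k
    rw [entry, (hK k).2, hM]
    congr 1
    ring
  -- Parseval
  have hsum : ∀ x : H2, HasSum (fun j : ℕ => ‖⟪fB j, x⟫‖ ^ 2) (‖x‖ ^ 2) := by
    intro x
    have h := fB.hasSum_inner_mul_inner x x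
    have hx : ⟪x, x⟫ = ((‖x‖ ^ 2 : ℝ) : ℂ) := by
      rw [inner_self_eq_norm_sq_to_K]
      norm_cast
    have hfun : (fun j : ℕ => ⟪x, fB j⟫ * ⟪fB j, x⟫)
        = fun j : ℕ => ((‖⟪fB j, x⟫‖ ^ 2 : ℝ) : ℂ) := by
      funext j
      rw [← inner_conj_symm]
      rw [RCLike.conj_mul]
      norm_cast
    rw [hfun, hx] at h
    exact Complex.hasSum_ofReal.mp h
  constructor
  · -- hyponormal → a = 0
    intro hyp
    funext t0
    show a t0 = 0
    set n : ℕ := if t0 % 2 = 0 then 1 else 0 with hn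
    have hn' : ((n : ℤ) = 1 ∧ t0 % 2 = 0) ∨ ((n : ℤ) = 0 ∧ t0 % 2 ≠ 0) := by
      by_cases h : t0 % 2 = 0 <;> simp [hn, h]
    have h01 : n = 0 ∨ n = 1 := by omega
    have hpar : ∀ m : ℕ, (2 * (m : ℤ) + n) ≠ t0 := by
      intro m
      omega
    have cV : ∀ m : ℕ, ⟪fB m, V (fB n)⟫ = a (2 * (m : ℤ) + n) := by
      intro m
      rcases h01 with h0 | h0 <;> rw [h0]
      · have h := E1 m 0
        rw [show (2 * 0 : ℕ) = 0 from rfl, ← hfB 0] at h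
        rw [h]
        norm_num
      · have h := E2 m 0
        rw [show (2 * 0 + 1 : ℕ) = 1 from rfl, ← hfB 1] at h
        rw [h]
        norm_num
    set σ : ℕ → ℤ := fun j =>
      if j % 2 = 0 then 2 * (n : ℤ) - (j / 2 : ℕ) else 2 * (n : ℤ) + (j / 2 : ℕ) + 1 with hσ
    have hσe : ∀ k : ℕ, σ (2 * k) = 2 * (n : ℤ) - k := by
      intro k
      have h1 : (2 * k) % 2 = 0 := by omega
      have h2 : (2 * k) / 2 = k := by omega
      simp [hσ, h1, h2] <;> omega
    have hσo : ∀ k : ℕ, σ (2 * k + 1) = 2 * (n : ℤ) + k + 1 := by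
      intro k
      have h1 : ¬ ((2 * k + 1) % 2 = 0) := by omega
      have h2 : (2 * k + 1) / 2 = k := by omega
      simp [hσ, h1, h2] <;> omega
    have dV : ∀ j : ℕ, ‖⟪fB j, ContinuousLinearMap.adjoint V (fB n)⟫‖ = ‖a (σ j)‖ := by
      intro j
      rw [ContinuousLinearMap.adjoint_inner_right, ← inner_conj_symm, RCLike.norm_conj]
      rcases Nat.even_or_odd j with ⟨k, hk⟩ | ⟨k, hk⟩
      · have hk2 : j = 2 * k := by omega
        subst hk2
        rw [hfB (2 * k), E1 n k, hσe]
      · have hk2 : j = 2 * k + 1 := by omega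
        subst hk2
        rw [hfB (2 * k + 1), E2 n k, hσo]
    have hs1 : HasSum (fun m : ℕ => ‖a (2 * (m : ℤ) + n)‖ ^ 2) (‖V (fB n)‖ ^ 2) := by
      have h := hsum (V (fB n))
      simpa only [cV] using h
    have hs2 : HasSum (fun j : ℕ => ‖a (σ j)‖ ^ 2)
        (‖ContinuousLinearMap.adjoint V (fB n)‖ ^ 2) := by
      have h := hsum (ContinuousLinearMap.adjoint V (fB n))
      simpa only [dV] using h
    have hinj : Function.Injective σ := by
      intro j1 j2 h
      rcases Nat.even_or_odd j1 with ⟨k1, e1⟩ | ⟨k1, e1⟩ <;>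
        rcases Nat.even_or_odd j2 with ⟨k2, e2⟩ | ⟨k2, e2⟩ <;>
        [ (have e1' : j1 = 2 * k1 := by omega); (have e1' : j1 = 2 * k1 := by omega);
          (have e1' : j1 = 2 * k1 + 1 := by omega); (have e1' : j1 = 2 * k1 + 1 := by omega)] <;>
        [ (have e2' : j2 = 2 * k2 := by omega); (have e2' : j2 = 2 * k2 + 1 := by omega);
          (have e2' : j2 = 2 * k2 := by omega); (have e2' : j2 = 2 * k2 + 1 := by omega)] <;>
        subst e1' <;> subst e2' <;>
        [rw [hσe, hσe] at h; rw [hσe, hσo] at h; rw [hσo, hσe] at h; rw [hσo, hσo] at h] <;>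
        omega
    have hsurj : Function.Surjective σ := by
      intro t
      by_cases ht : t ≤ 2 * (n : ℤ)
      · refine ⟨2 * (2 * (n : ℤ) - t).toNat, ?_⟩
        rw [hσe]
        have h := Int.toNat_of_nonneg (show (0:ℤ) ≤ 2 * (n : ℤ) - t by omega)
        omega
      · refine ⟨2 * (t - 2 * (n : ℤ) - 1).toNat + 1, ?_⟩
        rw [hσo]
        have h := Int.toNat_of_nonneg (show (0:ℤ) ≤ t - 2 * (n : ℤ) - 1 by omega)
        omega
    have hs3 : HasSum (fun t : ℤ => ‖a t‖ ^ 2)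
        (‖ContinuousLinearMap.adjoint V (fB n)‖ ^ 2) := by
      have hfc : (fun t : ℤ => ‖a t‖ ^ 2) ∘ (Equiv.ofBijective σ ⟨hinj, hsurj⟩)
          = fun j : ℕ => ‖a (σ j)‖ ^ 2 := rfl
      exact (Equiv.hasSum_iff (Equiv.ofBijective σ ⟨hinj, hsurj⟩)).mp (hfc ▸ hs2)
    set ρ : ℕ → ℤ := fun m => if m = 0 then t0 else 2 * ((m : ℤ) - 1) + (n : ℤ) with hρdef
    have hρ0 : ρ 0 = t0 := by simp [hρdef]
    have hρs : ∀ m : ℕ, ρ (m + 1) = 2 * (m : ℤ) + (n : ℤ) := by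
      intro m
      simp only [hρdef, Nat.succ_ne_zero, if_false]
      push_cast
      ring
    have h4 : HasSum (fun m : ℕ => ‖a (ρ (m + 1))‖ ^ 2) (‖V (fB n)‖ ^ 2) := by
      simp only [hρs]
      exact hs1
    have h5 := (hasSum_nat_add_iff (f := fun m : ℕ => ‖a (ρ m)‖ ^ 2) (G := ℝ) 1).mp h4
    rw [Finset.sum_range_one, hρ0] at h5
    have hρinj : Function.Injective ρ := by
      intro m1 m2 h
      match m1, m2 with
      | 0, 0 => rfl
      | 0, (m + 1) => rw [hρ0, hρs] at h; exact absurd h.symm (hpar m)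
      | (m + 1), 0 => rw [hρs, hρ0] at h; exact absurd h (hpar m)
      | (m1 + 1), (m2 + 1) => rw [hρs, hρs] at h; omega
    have hle : ‖V (fB n)‖ ^ 2 + ‖a t0‖ ^ 2
        ≤ ‖ContinuousLinearMap.adjoint V (fB n)‖ ^ 2 :=
      by
      refine hasSum_le_inj (f := fun m : ℕ => ‖a (ρ m)‖ ^ 2)
        (g := fun t : ℤ => ‖a t‖ ^ 2) ρ hρinj (fun c _ => sq_nonneg _)
        (fun i => le_rfl) h5 hs3
    have hyp' := hyp (fB n)
    have hsq : ‖ContinuousLinearMap.adjoint V (fB n)‖ ^ 2 ≤ ‖V (fB n)‖ ^ 2 :=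
      pow_le_pow_left₀ (norm_nonneg _) hyp' 2
    have h0 : ‖a t0‖ ^ 2 ≤ 0 := by linarith
    have : ‖a t0‖ = 0 := by nlinarith [norm_nonneg (a t0)]
    exact norm_eq_zero.mp this
  · -- a = 0 → hyponormal (indeed V = 0)
    intro ha f
    have hMadj : ∀ i : ℤ, ContinuousLinearMap.adjoint M (e i) = 0 := by
      intro i
      refine ext0 _ fun j => ?_
      rw [ContinuousLinearMap.adjoint_inner_right, ← inner_conj_symm, hM, ha]
      simp
    have hM0 : ∀ x : L2, M x = 0 := by
      intro x
      refine ext0 _ fun i => ?_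
      rw [← ContinuousLinearMap.adjoint_inner_left, hMadj, inner_zero_left]
    have hV0 : V = 0 := by
      ext g
      have h : (V g : L2) = 0 := by
        rw [hV, hM0, map_zero]
        simp
      exact h
    rw [hV0]
    have hadj : ContinuousLinearMap.adjoint (0 : H2 →L[ℂ] H2) = 0 := map_zero _
    rw [hadj]
end
end

section
/- For φ ∈ L^∞(𝕋), if the slant H-Toeplitz operator V_φ is an isometry on H² (i.e. V_φ* V_φ = I, equivalently ‖V_φ f‖ = ‖f‖ для all f ∈ H²), then φ = 0; in particular, no nonzero slant H-Toeplitz operator is an isometry. -/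
/- Abstract model of the setting of "Slant H-Toeplitz operators on the Hardy space":
`L2` is a complex Hilbert space with Hilbert basis `(e n)_{n ∈ ℤ}` (modelling `L²(𝕋)` with
`e n = zⁿ`), `H2` is the closed linear span of `{e n : n ≥ 0}` (the Hardy space `H²`), with
`eH : ℕ → H2` the corresponding orthonormal basis of `H2`.  A symbol `φ ∈ L^∞(𝕋)` is encoded
by its multiplication (Laurent) operator `M = M_φ` on `L2`, characterised by its matrix
`⟪e i, M (e j)⟫ = a (i - j)` where `a n = φ̂(n) = ⟨φ, e n⟩` are the Fourier coefficients of `φ`;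
note that a bounded operator with such a matrix is exactly a multiplication operator by an
`L^∞` function, that `‖M‖ = ‖φ‖_∞`, `M_φ* = M_{φ̄}`, and `φ = 0 ↔ a = 0`.
`W` and `K` are the auxiliary operators with `W e_{2n} = e n`, `W e_{2n+1} = 0` (`n ∈ ℤ`) and
`K e_{2n} = e n`, `K e_{2n+1} = e_{-n-1}` (`n ≥ 0`), and `orthogonalProjection H2` is `P`.
The slant H-Toeplitz operator `V_φ` is `W P M_φ K : H² → H²`.
(Matrix entries: the paper's `⟨f, g⟩ = ∫ f ḡ` is Mathlib's `⟪g, f⟫`, conjugate-linear in the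
first slot, so the paper's matrix entry `⟨A e_j, e_i⟩` is `⟪e i, A (e j)⟫` here.) -/

open scoped ComplexInnerProductSpace

noncomputable section

/-- If `V_φ` is an isometry on `H²` (`V_φ* V_φ = I`, equivalently
`‖V_φ f‖ = ‖f‖` for all `f`), then `φ = 0`; so no nonzero slant H-Toeplitz operator is an
isometry. -/
theorem eq_zero_of_isometry
    {L2 : Type*} [NormedAddCommGroup L2] [InnerProductSpace ℂ L2] [CompleteSpace L2]
    -- the orthonormal (Fourier) basis `e n ↔ zⁿ` of `L²(𝕋)`
    (e : HilbertBasis ℤ ℂ L2)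
    -- the Hardy space `H²`, the closed linear span of `{e n : n ≥ 0}`
    (H2 : Submodule ℂ L2) [CompleteSpace H2]
    (hH2 : H2 = (Submodule.span ℂ (Set.range fun n : ℕ => e (n : ℤ))).topologicalClosure)
    (eH : ℕ → H2) (heH : ∀ n : ℕ, (eH n : L2) = e (n : ℤ))
    -- the operator `W`: `W e_{2n} = e n`, `W e_{2n+1} = 0` for all `n ∈ ℤ`
    (W : L2 →L[ℂ] L2)
    (hW : ∀ n : ℤ, W (e (2 * n)) = e n ∧ W (e (2 * n + 1)) = 0)
    -- the operator `K : H² → L²`: `K e_{2n} = e n`, `K e_{2n+1} = e_{-n-1}` for all `n ≥ 0`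
    (K : H2 →L[ℂ] L2)
    (hK : ∀ n : ℕ, K (eH (2 * n)) = e (n : ℤ) ∧ K (eH (2 * n + 1)) = e (-(n : ℤ) - 1))
    -- `φ ∈ L^∞`, encoded by its Fourier coefficients `a` and multiplication operator `M = M_φ`
    (a : ℤ → ℂ) (M : L2 →L[ℂ] L2)
    (hM : ∀ i j : ℤ, ⟪e i, M (e j)⟫ = a (i - j))
    -- the slant H-Toeplitz operator `V_φ = W P M_φ K : H² → H²`
    (V : H2 →L[ℂ] H2)
    (hV : ∀ f : H2, (V f : L2) = W ↑(H2.orthogonalProjection (M (K f))))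
    (hiso : (ContinuousLinearMap.adjoint V).comp V = ContinuousLinearMap.id ℂ H2) :
    a = 0 := by
  have hoe : ∀ i j : ℤ, ⟪(e i : L2), e j⟫ = if i = j then 1 else 0 :=
    orthonormal_iff_ite.mp e.orthonormal
  -- `e n ∈ H2` for `n ≥ 0`
  have hmem : ∀ n : ℤ, 0 ≤ n → e n ∈ H2 := by
    intro n hn
    rw [hH2]
    exact Submodule.le_topologicalClosure _
      (Submodule.subset_span ⟨n.toNat, congrArg e (Int.toNat_of_nonneg hn)⟩)
  -- `e m ∈ H2ᗮ` for `m < 0`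
  have hperp : ∀ m : ℤ, m < 0 → e m ∈ H2ᗮ := by
    intro m hm
    have h1 : e m ∈ (Submodule.span ℂ (Set.range fun n : ℕ => e (n : ℤ)))ᗮ := by
      rw [Submodule.mem_orthogonal]
      intro u hu
      induction hu using Submodule.span_induction with
      | mem x hx =>
          obtain ⟨n, rfl⟩ := hx
          rw [hoe]
          have : (n : ℤ) ≠ m := by omega
          simp [this]
      | zero => simp
      | add x y _ _ hx hy => rw [inner_add_left, hx, hy, add_zero]
      | smul c x _ hx => rw [inner_smul_left, hx, mul_zero]
    rw [hH2, ← Submodule.orthogonal_orthogonal_eq_closure]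
    exact Submodule.le_orthogonal_orthogonal _ h1
  -- coefficients of the orthogonal projection
  have hP : ∀ (k : ℤ) (x : L2),
      ⟪(e (2 * k) : L2), (H2.orthogonalProjection x : L2)⟫
        = if 0 ≤ k then ⟪(e (2 * k) : L2), x⟫ else 0 := by
    intro k x
    by_cases hk : 0 ≤ k
    · rw [if_pos hk, ← Submodule.starProjection_apply, ← Submodule.inner_starProjection_left_eq_right,
        Submodule.starProjection_eq_self_iff.mpr (hmem (2 * k) (by omega))]
    · rw [if_neg hk]
      exact Submodule.inner_left_of_mem_orthogonal (SetLike.coe_mem _)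
        (hperp (2 * k) (by omega))
  -- coefficients of `W`
  have hWc : ∀ (k : ℤ) (x : L2), ⟪(e k : L2), W x⟫ = ⟪(e (2 * k) : L2), x⟫ := by
    intro k
    have hext : (innerSL ℂ (e k)).comp W = innerSL ℂ (e (2 * k)) := by
      refine ContinuousLinearMap.ext_on (Submodule.dense_iff_topologicalClosure_eq_top.mpr e.dense_span) ?_
      rintro _ ⟨m, rfl⟩
      rcases Int.even_or_odd m with ⟨n, hn⟩ | ⟨n, hn⟩
      · have hm : m = 2 * n := by omega
        subst hm
        rw [ContinuousLinearMap.comp_apply, innerSL_apply_apply, innerSL_apply_apply, (hW n).1, hoe, hoe]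
        by_cases h : k = n
        · rw [if_pos h, if_pos (by omega)]
        · rw [if_neg h, if_neg (by omega)]
      · have hm : m = 2 * n + 1 := by omega
        subst hm
        rw [ContinuousLinearMap.comp_apply, innerSL_apply_apply, innerSL_apply_apply, (hW n).2,
          inner_zero_right, hoe, if_neg (by omega)]
    intro x
    have := congrArg (fun T : L2 →L[ℂ] ℂ => T x) hext
    simpa using this
  -- coefficients of `V (eH j)` when `K (eH j) = e m`
  have hVc : ∀ (j : ℕ) (m : ℤ), K (eH j) = e m → ∀ k : ℤ,
      ⟪(e k : L2), (V (eH j) : L2)⟫ = if 0 ≤ k then a (2 * k - m) else 0 := by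
    intro j m hKj k
    rw [hV, hKj, hWc, hP]
    by_cases hk : 0 ≤ k
    · rw [if_pos hk, if_pos hk, hM]
    · rw [if_neg hk, if_neg hk]
  -- the isometry property : `⟪V (eH j), V (eH j)⟫ = 1`
  have hVV : ∀ j : ℕ, ⟪(V (eH j) : L2), (V (eH j) : L2)⟫ = 1 := by
    intro j
    have h1 : (ContinuousLinearMap.adjoint V) (V (eH j)) = eH j := by
      have := congrArg (fun T : H2 →L[ℂ] H2 => T (eH j)) hiso
      simpa using this
    calc ⟪(V (eH j) : L2), (V (eH j) : L2)⟫
        = ⟪V (eH j), V (eH j)⟫ := (Submodule.coe_inner H2 _ _).symm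
      _ = ⟪(ContinuousLinearMap.adjoint V) (V (eH j)), eH j⟫ :=
          (ContinuousLinearMap.adjoint_inner_left V _ _).symm
      _ = ⟪eH j, eH j⟫ := by rw [h1]
      _ = ⟪(eH j : L2), (eH j : L2)⟫ := Submodule.coe_inner H2 _ _
      _ = 1 := by rw [heH, hoe]; simp
  -- key identity : for every `m`, `∑_{k ≥ 0} |a (2k - m)|² = 1`
  have key : ∀ m : ℤ, HasSum
      (fun k : ℕ => star (a (2 * (k : ℤ) - m)) * a (2 * (k : ℤ) - m)) 1 := by
    intro m
    obtain ⟨j, hj⟩ : ∃ j : ℕ, K (eH j) = e m := by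
      rcases le_or_gt 0 m with hm | hm
      · exact ⟨2 * m.toNat, by rw [(hK m.toNat).1, Int.toNat_of_nonneg hm]⟩
      · refine ⟨2 * (-m - 1).toNat + 1, ?_⟩
        rw [(hK (-m - 1).toNat).2]
        congr 1
        rw [Int.toNat_of_nonneg (by omega : (0:ℤ) ≤ -m - 1)]
        ring
    set xv : L2 := (V (eH j) : L2) with hxv
    have hsum : HasSum (fun k : ℤ => ⟪xv, (e k : L2)⟫ * ⟪(e k : L2), xv⟫) 1 := by
      have := e.hasSum_inner_mul_inner xv xv
      rwa [hVV j] at this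
    have hinj : Function.Injective ((↑) : ℕ → ℤ) := Nat.cast_injective
    have h0 : ∀ x ∉ Set.range ((↑) : ℕ → ℤ),
        ⟪xv, (e x : L2)⟫ * ⟪(e x : L2), xv⟫ = 0 := by
      intro x hx
      have hxneg : ¬ 0 ≤ x := by
        intro h
        exact hx ⟨x.toNat, Int.toNat_of_nonneg h⟩
      rw [hVc j m hj x, if_neg hxneg, mul_zero]
    have h2 := (hinj.hasSum_iff h0).2 hsum
    convert h2 using 1
    funext k
    simp only [Function.comp_apply]
    rw [show ⟪xv, ((e (k : ℤ)) : L2)⟫ = (starRingEnd ℂ) ⟪((e (k : ℤ)) : L2), xv⟫ from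
        (inner_conj_symm _ _).symm,
      hVc j m hj (k : ℤ), if_pos (Int.natCast_nonneg k)]
    rfl
  -- conclude
  funext n
  have h1 := key (-n)
  have h2 := key (-n - 2)
  set f : ℕ → ℂ := fun k => star (a (2 * (k : ℤ) + n)) * a (2 * (k : ℤ) + n) with hf
  have h1' : HasSum f 1 := by
    have hfe : (fun k : ℕ => star (a (2 * (k : ℤ) - -n)) * a (2 * (k : ℤ) - -n)) = f := by
      funext k
      have hxy : 2 * (k : ℤ) - -n = 2 * (k : ℤ) + n := by ring
      simp only [hf, hxy]
    rw [← hfe]; exact h1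
  have h2' : HasSum (fun k : ℕ => f (k + 1)) 1 := by
    have hfe : (fun k : ℕ => star (a (2 * (k : ℤ) - (-n - 2))) * a (2 * (k : ℤ) - (-n - 2)))
        = fun k : ℕ => f (k + 1) := by
      funext k
      have hxy : 2 * (k : ℤ) - (-n - 2) = 2 * ((k : ℕ) + 1 : ℕ) + n := by push_cast; ring
      simp only [hf, hxy]
    rw [← hfe]; exact h2
  have h3 : HasSum f (1 + ∑ i ∈ Finset.range 1, f i) := (hasSum_nat_add_iff 1).1 h2'
  have h4 : (1 : ℂ) = 1 + f 0 := by
    have := h1'.unique h3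
    simpa using this
  have h5 : f 0 = 0 := by linear_combination -h4
  have h6 : star (a n) * a n = 0 := by simpa [hf] using h5
  exact (CStarRing.star_mul_self_eq_zero_iff (a n)).mp h6

end
end

section
/- For φ ∈ L^∞(𝕋), the slant H-Toeplitz operator V_φ is self-adjoint (V_φ = V_φ*) if and only if φ = 0. -/
/- Abstract model of the setting of "Slant H-Toeplitz operators on the Hardy space":
`L2` is a complex Hilbert space with Hilbert basis `(e n)_{n ∈ ℤ}` (modelling `L²(𝕋)` with
`e n = zⁿ`), `H2` is the closed linear span of `{e n : n ≥ 0}` (the Hardy space `H²`), with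
`eH : ℕ → H2` the corresponding orthonormal basis of `H2`.  A symbol `φ ∈ L^∞(𝕋)` is encoded
by its multiplication (Laurent) operator `M = M_φ` on `L2`, characterised by its matrix
`⟪e i, M (e j)⟫ = a (i - j)` where `a n = φ̂(n) = ⟨φ, e n⟩` are the Fourier coefficients of `φ`;
note that a bounded operator with such a matrix is exactly a multiplication operator by an
`L^∞` function, that `‖M‖ = ‖φ‖_∞`, `M_φ* = M_{φ̄}`, and `φ = 0 ↔ a = 0`.
`W` and `K` are the auxiliary operators with `W e_{2n} = e n`, `W e_{2n+1} = 0` (`n ∈ ℤ`) and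
`K e_{2n} = e n`, `K e_{2n+1} = e_{-n-1}` (`n ≥ 0`), and `orthogonalProjection H2` is `P`.
The slant H-Toeplitz operator `V_φ` is `W P M_φ K : H² → H²`.
(Matrix entries: the paper's `⟨f, g⟩ = ∫ f ḡ` is Mathlib's `⟪g, f⟫`, conjugate-linear in the
first slot, so the paper's matrix entry `⟨A e_j, e_i⟩` is `⟪e i, A (e j)⟫` here.) -/

open scoped ComplexInnerProductSpace

noncomputable section

/-- The bijection `ℕ → ℤ` with `σ(2m) = m`, `σ(2m+1) = -m-1`, so that `K e_j = e_{σ j}`. -/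
private def sig (k : ℕ) : ℤ := if Even k then ((k / 2 : ℕ) : ℤ) else -((k / 2 : ℕ) : ℤ) - 1

private lemma sig_le (k : ℕ) : sig k ≤ (k : ℤ) := by
  unfold sig; split <;> omega

private lemma sig_two_mul (p : ℕ) : sig (2 * p) = (p : ℤ) := by
  unfold sig
  rw [if_pos (even_two_mul p)]
  omega

private lemma sig_odd (m : ℕ) : sig (2 * m + 1) = -(m : ℤ) - 1 := by
  unfold sig
  rw [if_neg (by simp [Nat.even_iff, Nat.add_mod])]
  omega

/-- `V_φ` is self-adjoint iff `φ = 0`. -/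
theorem selfAdjoint_iff_zero
    {L2 : Type*} [NormedAddCommGroup L2] [InnerProductSpace ℂ L2] [CompleteSpace L2]
    -- the orthonormal (Fourier) basis `e n ↔ zⁿ` of `L²(𝕋)`
    (e : HilbertBasis ℤ ℂ L2)
    -- the Hardy space `H²`, the closed linear span of `{e n : n ≥ 0}`
    (H2 : Submodule ℂ L2) [CompleteSpace H2]
    (hH2 : H2 = (Submodule.span ℂ (Set.range fun n : ℕ => e (n : ℤ))).topologicalClosure)
    (eH : ℕ → H2) (heH : ∀ n : ℕ, (eH n : L2) = e (n : ℤ))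
    -- the operator `W`: `W e_{2n} = e n`, `W e_{2n+1} = 0` for all `n ∈ ℤ`
    (W : L2 →L[ℂ] L2)
    (hW : ∀ n : ℤ, W (e (2 * n)) = e n ∧ W (e (2 * n + 1)) = 0)
    -- the operator `K : H² → L²`: `K e_{2n} = e n`, `K e_{2n+1} = e_{-n-1}` for all `n ≥ 0`
    (K : H2 →L[ℂ] L2)
    (hK : ∀ n : ℕ, K (eH (2 * n)) = e (n : ℤ) ∧ K (eH (2 * n + 1)) = e (-(n : ℤ) - 1))
    -- `φ ∈ L^∞`, encoded by its Fourier coefficients `a` and multiplication operator `M = M_φ`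
    (a : ℤ → ℂ) (M : L2 →L[ℂ] L2)
    (hM : ∀ i j : ℤ, ⟪e i, M (e j)⟫ = a (i - j))
    -- the slant H-Toeplitz operator `V_φ = W P M_φ K : H² → H²`
    (V : H2 →L[ℂ] H2)
    (hV : ∀ f : H2, (V f : L2) = W ↑(H2.orthogonalProjectionOnto (M (K f))))
 :
    V = ContinuousLinearMap.adjoint V ↔ a = 0 := by
  have hdense : Dense ((Submodule.span ℂ (Set.range e) : Submodule ℂ L2) : Set L2) :=
    Submodule.dense_iff_topologicalClosure_eq_top.mpr e.dense_span
  have horth : ∀ i j : ℤ, ⟪e i, e j⟫ = if i = j then (1 : ℂ) else 0 :=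
    fun i j => orthonormal_iff_ite.mp e.orthonormal i j
  have hmem : ∀ m : ℕ, e (m : ℤ) ∈ H2 := by
    intro m
    rw [hH2]
    exact Submodule.le_topologicalClosure _ (Submodule.subset_span ⟨m, rfl⟩)
  -- `W* e_i = e_{2i}` as a statement about inner products
  have hWin : ∀ (i : ℤ) (x : L2), ⟪e i, W x⟫ = ⟪e (2 * i), x⟫ := by
    intro i x
    have h : (innerSL ℂ (e i)).comp W = innerSL ℂ (e (2 * i)) := by
      apply ContinuousLinearMap.ext_on hdense
      rintro y ⟨k, rfl⟩
      rcases Int.even_or_odd k with ⟨n, hn⟩ | ⟨n, hn⟩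
      · rw [← two_mul] at hn
        subst hn
        simp only [ContinuousLinearMap.comp_apply, innerSL_apply_apply]
        rw [(hW n).1, horth, horth]
        by_cases hin : i = n
        · rw [if_pos hin, if_pos (by omega)]
        · rw [if_neg hin, if_neg (by omega)]
      · subst hn
        simp only [ContinuousLinearMap.comp_apply, innerSL_apply_apply]
        rw [(hW n).2, inner_zero_right, horth, if_neg (by omega)]
    exact congrFun (congrArg (fun T : L2 →L[ℂ] ℂ => (T : L2 → ℂ)) h) x
  -- projection fixes inner products against vectors of `H2`
  have hproj : ∀ (w : L2), w ∈ H2 → ∀ y : L2,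
      ⟪w, (H2.orthogonalProjectionOnto y : L2)⟫ = ⟪w, y⟫ := by
    intro w hw y
    have h := Submodule.inner_orthogonalProjectionOnto_eq_of_mem_left (K := H2) ⟨w, hw⟩ y
    rwa [Submodule.coe_inner] at h
  -- `K` on the basis
  have hKe : ∀ j : ℕ, K (eH j) = e (sig j) := by
    intro j
    rcases Nat.even_or_odd j with ⟨m, hm⟩ | ⟨m, hm⟩
    · have hj : j = 2 * m := by omega
      rw [hj, sig_two_mul]
      exact (hK m).1
    · have hj : j = 2 * m + 1 := by omega
      rw [hj, sig_odd]
      exact (hK m).2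
  -- matrix entries of `V`
  have hmat : ∀ i j : ℕ, ⟪eH i, V (eH j)⟫ = a (2 * (i : ℤ) - sig j) := by
    intro i j
    rw [Submodule.coe_inner, hV, heH, hWin]
    have h2i : (2 * (i : ℤ)) = ((2 * i : ℕ) : ℤ) := by push_cast; ring
    rw [h2i, hproj _ (hmem (2 * i)) _, hKe, hM]
  constructor
  · -- forward direction: self-adjoint implies `a = 0`
    intro h
    have rel : ∀ i j : ℕ,
        a (2 * (i : ℤ) - sig j) = starRingEnd ℂ (a (2 * (j : ℤ) - sig i)) := by
      intro i j
      rw [← hmat, ← hmat]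
      calc ⟪eH i, V (eH j)⟫ = ⟪V (eH i), eH j⟫ := by
            conv_lhs => rw [h]
            exact ContinuousLinearMap.adjoint_inner_right V _ _
        _ = starRingEnd ℂ ⟪eH j, V (eH i)⟫ := (inner_conj_symm _ _).symm
    -- square-summability of the Fourier coefficients
    have hsum : Summable fun k : ℤ => ‖a k‖ ^ (2 : ℝ) := by
      have hm2 : Memℓp (fun k : ℤ => e.repr (M (e 0)) k) 2 := lp.memℓp _
      have hs := hm2.summable (by norm_num : (0 : ℝ) < (2 : ENNReal).toReal)
      have htr : (2 : ENNReal).toReal = (2 : ℝ) := by norm_num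
      rw [htr] at hs
      convert hs using 2 with k
      rw [HilbertBasis.repr_apply_apply, hM]
      norm_num
    funext n
    by_contra hn
    set c := starRingEnd ℂ (a n) with hc
    have hc0 : c ≠ 0 := by simpa [hc] using hn
    set T := {k : ℤ | a k = c} with hT
    have hTfin : T.Finite := by
      have hpos : (0 : ℝ) < ‖c‖ ^ (2 : ℝ) := by
        apply Real.rpow_pos_of_pos
        simpa using hc0
      have hev : ∀ᶠ k in Filter.cofinite, ‖a k‖ ^ (2 : ℝ) < ‖c‖ ^ (2 : ℝ) :=
        hsum.tendsto_cofinite_zero.eventually_lt_const hpos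
      refine Set.Finite.subset (Filter.eventually_cofinite.mp hev) ?_
      intro k hk
      simp only [Set.mem_setOf_eq] at hk ⊢
      rw [hk]
      exact lt_irrefl _
    obtain ⟨B, hB⟩ := hTfin.bddAbove
    -- for every `q`, a far-out point of `T`
    have key : ∀ q : ℕ, ∃ m : ℤ, m ∈ T ∧ 7 * (q : ℤ) - n.natAbs ≤ m := by
      intro q
      refine ⟨2 * ((2 * (n.natAbs + 2 * q) : ℕ) : ℤ) - sig (n.toNat + q), ?_, ?_⟩
      · have h1 := rel (2 * (n.natAbs + 2 * q)) (n.toNat + q)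
        rw [sig_two_mul] at h1
        have h2 : 2 * ((n.toNat + q : ℕ) : ℤ) - ((n.natAbs + 2 * q : ℕ) : ℤ) = n := by
          omega
        rw [h2] at h1
        exact h1
      · have hs := sig_le (n.toNat + q)
        omega
    obtain ⟨m, hmT, hm⟩ := key (B + n.natAbs + 1).toNat
    have hmB : m ≤ B := hB hmT
    have hq : (B + (n.natAbs : ℤ) + 1) ≤ ((B + n.natAbs + 1).toNat : ℤ) ∨
        ((B + n.natAbs + 1).toNat : ℤ) = 0 := by omega
    omega
  · -- converse: `a = 0` implies `V = 0`, which is self-adjoint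
    intro h
    have hzero : ∀ x : L2, (∀ i : ℤ, ⟪e i, x⟫ = 0) → x = 0 := by
      intro x hx
      have hr : e.repr x = 0 := by
        apply lp.ext
        funext i
        rw [e.repr_apply_apply, hx]
        rfl
      exact e.repr.map_eq_zero_iff.mp hr
    have hM0 : ∀ x : L2, M x = 0 := by
      have hMeq : M = 0 := by
        apply ContinuousLinearMap.ext_on hdense
        rintro y ⟨k, rfl⟩
        show M (e k) = (0 : L2 →L[ℂ] L2) (e k)
        rw [ContinuousLinearMap.zero_apply]
        apply hzero
        intro i
        rw [hM, h]
        rfl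
      intro x; rw [hMeq]; rfl
    have hV0 : V = 0 := by
      ext f
      rw [hV, hM0, map_zero]
      simp
    rw [hV0]
    ext f
    simp [ContinuousLinearMap.adjoint_inner_right]
end
end

section
/- For φ ∈ L^∞(𝕋), the slant Toeplitz operator B_φ = P W M_φ|_{H²} is a slant H-Toeplitz operator, i.e. B_φ = V_ψ for some ψ ∈ L^∞(𝕋), if and only if φ = 0. -/
/- Abstract model of the setting of "Slant H-Toeplitz operators on the Hardy space":
`L2` is a complex Hilbert space with Hilbert basis `(e n)_{n ∈ ℤ}` (modelling `L²(𝕋)` with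
`e n = zⁿ`), `H2` is the closed linear span of `{e n : n ≥ 0}` (the Hardy space `H²`), with
`eH : ℕ → H2` the corresponding orthonormal basis of `H2`.  A symbol `φ ∈ L^∞(𝕋)` is encoded
by its multiplication (Laurent) operator `M = M_φ` on `L2`, characterised by its matrix
`⟪e i, M (e j)⟫ = a (i - j)` where `a n = φ̂(n) = ⟨φ, e n⟩` are the Fourier coefficients of `φ`;
note that a bounded operator with such a matrix is exactly a multiplication operator by an
`L^∞` function, that `‖M‖ = ‖φ‖_∞`, `M_φ* = M_{φ̄}`, and `φ = 0 ↔ a = 0`.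
`W` and `K` are the auxiliary operators with `W e_{2n} = e n`, `W e_{2n+1} = 0` (`n ∈ ℤ`) and
`K e_{2n} = e n`, `K e_{2n+1} = e_{-n-1}` (`n ≥ 0`), and `orthogonalProjection H2` is `P`.
The slant H-Toeplitz operator `V_φ` is `W P M_φ K : H² → H²`.
(Matrix entries: the paper's `⟨f, g⟩ = ∫ f ḡ` is Mathlib's `⟪g, f⟫`, conjugate-linear in the
first slot, so the paper's matrix entry `⟨A e_j, e_i⟩` is `⟪e i, A (e j)⟫` here.) -/

open scoped ComplexInnerProductSpace

noncomputable section

/-- A continuous linear map out of a Hilbert space is determined by its values on a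
Hilbert basis. -/
lemma clm_ext_hilbertBasis {L2 F : Type*} [NormedAddCommGroup L2] [InnerProductSpace ℂ L2]
    [CompleteSpace L2] [NormedAddCommGroup F] [NormedSpace ℂ F]
    (e : HilbertBasis ℤ ℂ L2) {T S : L2 →L[ℂ] F}
    (h : ∀ i : ℤ, T (e i) = S (e i)) : T = S := by
  apply ContinuousLinearMap.ext_on (s := Set.range e)
  · rw [Submodule.dense_iff_topologicalClosure_eq_top]
    simp
  · rintro x ⟨i, rfl⟩
    exact h i

/-- The slant Toeplitz operator `B_φ = P W M_φ|_{H²}` is a slant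
H-Toeplitz operator (`B_φ = V_ψ` for some `ψ ∈ L^∞`) iff `φ = 0`. -/
theorem slantToeplitz_is_slantHToeplitz_iff_zero
    {L2 : Type*} [NormedAddCommGroup L2] [InnerProductSpace ℂ L2] [CompleteSpace L2]
    -- the orthonormal (Fourier) basis `e n ↔ zⁿ` of `L²(𝕋)`
    (e : HilbertBasis ℤ ℂ L2)
    -- the Hardy space `H²`, the closed linear span of `{e n : n ≥ 0}`
    (H2 : Submodule ℂ L2) [CompleteSpace H2]
    (hH2 : H2 = (Submodule.span ℂ (Set.range fun n : ℕ => e (n : ℤ))).topologicalClosure)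
    (eH : ℕ → H2) (heH : ∀ n : ℕ, (eH n : L2) = e (n : ℤ))
    -- the operator `W`: `W e_{2n} = e n`, `W e_{2n+1} = 0` for all `n ∈ ℤ`
    (W : L2 →L[ℂ] L2)
    (hW : ∀ n : ℤ, W (e (2 * n)) = e n ∧ W (e (2 * n + 1)) = 0)
    -- the operator `K : H² → L²`: `K e_{2n} = e n`, `K e_{2n+1} = e_{-n-1}` for all `n ≥ 0`
    (K : H2 →L[ℂ] L2)
    (hK : ∀ n : ℕ, K (eH (2 * n)) = e (n : ℤ) ∧ K (eH (2 * n + 1)) = e (-(n : ℤ) - 1))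
    -- `φ ∈ L^∞`, encoded by its Fourier coefficients `a` and multiplication operator `M = M_φ`
    (a : ℤ → ℂ) (M : L2 →L[ℂ] L2)
    (hM : ∀ i j : ℤ, ⟪e i, M (e j)⟫ = a (i - j))
    -- the slant Toeplitz operator `B_φ = P W M_φ|_{H²}`
    (B : H2 →L[ℂ] H2)
    (hB : ∀ f : H2, B f = Submodule.orthogonalProjectionOnto H2 (W (M (f : L2)))) :
    (∃ (b : ℤ → ℂ) (N : L2 →L[ℂ] L2),
      (∀ i j : ℤ, ⟪e i, N (e j)⟫ = b (i - j)) ∧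
      ∀ f : H2, (B f : L2) = W ↑(Submodule.orthogonalProjectionOnto H2 (N (K f)))) ↔
    a = 0 := by
  classical
  have horth := e.orthonormal
  have hortho : ∀ i j : ℤ, ⟪e i, e j⟫ = if i = j then 1 else 0 :=
    orthonormal_iff_ite.mp horth
  have hmem : ∀ m : ℤ, 0 ≤ m → e m ∈ H2 := by
    intro m hm
    have h := heH m.toNat
    rw [Int.toNat_of_nonneg hm] at h
    rw [← h]; exact (eH m.toNat).2
  have hP : ∀ (m : ℤ), 0 ≤ m → ∀ x : L2,
      ⟪e m, (↑(Submodule.orthogonalProjectionOnto H2 x) : L2)⟫ = ⟪e m, x⟫ := by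
    intro m hm x
    have h := Submodule.inner_orthogonalProjectionOnto_eq_of_mem_left (K := H2) (⟨e m, hmem m hm⟩ : H2) x
    exact h
  have hWin : ∀ (i : ℤ) (y : L2), ⟪e i, W y⟫ = ⟪e (2 * i), y⟫ := by
    intro i y
    have key : (innerSL ℂ (e i)).comp W = innerSL ℂ (e (2 * i)) := by
      apply clm_ext_hilbertBasis e
      intro m
      rcases Int.even_or_odd m with ⟨k, hk⟩ | ⟨k, hk⟩
      · have hm : m = 2 * k := by omega
        subst hm
        simp only [ContinuousLinearMap.comp_apply, innerSL_apply_apply, (hW k).1, hortho]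
        by_cases h : i = k
        · simp [h]
        · simp [h, show ¬(2 * i = 2 * k) by omega]
      · have hm : m = 2 * k + 1 := by omega
        subst hm
        simp only [ContinuousLinearMap.comp_apply, innerSL_apply_apply, (hW k).2, hortho,
          inner_zero_right]
        simp [show ¬(2 * i = 2 * k + 1) by omega]
    have := ContinuousLinearMap.ext_iff.mp key y
    simpa using this
  constructor
  · rintro ⟨b, N, hN, hV⟩
    have hE : ∀ (i j : ℕ), a (2 * (i : ℤ) - j) = ⟪e (2 * (i : ℤ)), N (K (eH j))⟫ := by
      intro i j
      have h1 : ⟪e (i : ℤ), ((B (eH j) : L2))⟫ = a (2 * (i : ℤ) - j) := by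
        rw [hB, hP (i : ℤ) (Int.natCast_nonneg i), hWin, heH, hM]
      have h2 : ⟪e (i : ℤ), W ↑(Submodule.orthogonalProjectionOnto H2 (N (K (eH j))))⟫
          = ⟪e (2 * (i : ℤ)), N (K (eH j))⟫ := by
        rw [hWin, hP (2 * (i : ℤ)) (by positivity)]
      rw [← h1, hV (eH j), h2]
    have E1 : ∀ i n : ℤ, 0 ≤ i → 0 ≤ n → a (2 * i - 2 * n) = b (2 * i - n) := by
      intro i n hi hn
      have h := hE i.toNat (2 * n.toNat)
      rw [(hK n.toNat).1, hN] at h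
      push_cast at h
      rw [Int.toNat_of_nonneg hi, Int.toNat_of_nonneg hn] at h
      exact h
    have E2 : ∀ i n : ℤ, 0 ≤ i → 0 ≤ n → a (2 * i - 2 * n - 1) = b (2 * i + n + 1) := by
      intro i n hi hn
      have h := hE i.toNat (2 * n.toNat + 1)
      rw [(hK n.toNat).2, hN] at h
      push_cast at h
      rw [Int.toNat_of_nonneg hi, Int.toNat_of_nonneg hn] at h
      rw [show 2 * i - 2 * n - 1 = 2 * i - (2 * n + 1) by ring,
        show 2 * i + n + 1 = 2 * i - (-n - 1) by ring]
      exact h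
    have hb : ∀ m : ℤ, 0 ≤ m → b m = a 0 := by
      intro m hm
      have h := E1 m m hm hm
      rw [show 2 * m - 2 * m = 0 by ring, show 2 * m - m = m by ring] at h
      exact h.symm
    have ha : ∀ k : ℤ, a k = a 0 := by
      intro k
      rcases Int.even_or_odd k with ⟨c, hc⟩ | ⟨c, hc⟩
      · have h := E1 (2 * (c.natAbs : ℤ) + c) (2 * (c.natAbs : ℤ)) (by omega) (by omega)
        rw [hb _ (by omega)] at h
        rw [show k = 2 * (2 * (c.natAbs : ℤ) + c) - 2 * (2 * (c.natAbs : ℤ)) by omega]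
        exact h
      · have h := E2 (((c + 1).natAbs : ℤ) + (c + 1)) ((c + 1).natAbs : ℤ)
          (by omega) (by omega)
        rw [hb _ (by omega)] at h
        rw [show k = 2 * (((c + 1).natAbs : ℤ) + (c + 1)) - 2 * ((c + 1).natAbs : ℤ) - 1
          by omega]
        exact h
    have hsum : Summable (fun _ : ℤ => ‖a 0‖ ^ 2) := by
      have h := horth.inner_products_summable (x := M (e 0))
      have heq : (fun i : ℤ => ‖⟪e i, M (e 0)⟫‖ ^ 2) = fun _ : ℤ => ‖a 0‖ ^ 2 := by
        funext i
        rw [hM i 0, sub_zero, ha i]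
      rwa [heq] at h
    have h0 : ‖a 0‖ ^ 2 = 0 := (summable_const_iff _).mp hsum
    have ha0 : a 0 = 0 := by
      have hn : ‖a 0‖ = 0 := by
        have := sq_nonneg ‖a 0‖
        nlinarith [norm_nonneg (a 0)]
      simpa using hn
    funext k
    rw [Pi.zero_apply, ha k, ha0]
  · intro ha0
    have hM0 : M = 0 := by
      apply clm_ext_hilbertBasis e
      intro j
      rw [ContinuousLinearMap.zero_apply]
      have hz : e.repr (M (e j)) = 0 := by
        apply lp.ext
        funext i
        rw [e.repr_apply_apply, hM i j, ha0]
        simp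
      exact e.repr.map_eq_zero_iff.mp hz
    refine ⟨0, 0, ?_, ?_⟩
    · intro i j; simp
    · intro f
      rw [hB, hM0]
      simp
end
end

section
/- Let φ ∈ L^∞(𝕋). If the slant Hankel operator L_φ = W H_φ is a slant H-Toeplitz operator, i.e. L_φ = V_ψ for some ψ ∈ L^∞(𝕋), then φ̂(1) = 0 and φ̂(n) = 0 for every integer n ≥ 3; equivalently, φ is orthogonal in L² to z + z³ψ for every ψ ∈ H^∞, i.e. φ ∈ (z + z³H^∞)^⊥ where z + z³H^∞ = {z + z³ψ : ψ ∈ H^∞}. -/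
/- Abstract model of the setting of "Slant H-Toeplitz operators on the Hardy space":
`L2` is a complex Hilbert space with Hilbert basis `(e n)_{n ∈ ℤ}` (modelling `L²(𝕋)` with
`e n = zⁿ`), `H2` is the closed linear span of `{e n : n ≥ 0}` (the Hardy space `H²`), with
`eH : ℕ → H2` the corresponding orthonormal basis of `H2`.  A symbol `φ ∈ L^∞(𝕋)` is encoded
by its multiplication (Laurent) operator `M = M_φ` on `L2`, characterised by its matrix
`⟪e i, M (e j)⟫ = a (i - j)` where `a n = φ̂(n) = ⟨φ, e n⟩` are the Fourier coefficients of `φ`;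
note that a bounded operator with such a matrix is exactly a multiplication operator by an
`L^∞` function, that `‖M‖ = ‖φ‖_∞`, `M_φ* = M_{φ̄}`, and `φ = 0 ↔ a = 0`.
`W` and `K` are the auxiliary operators with `W e_{2n} = e n`, `W e_{2n+1} = 0` (`n ∈ ℤ`) and
`K e_{2n} = e n`, `K e_{2n+1} = e_{-n-1}` (`n ≥ 0`), and `orthogonalProjection H2` is `P`.
The slant H-Toeplitz operator `V_φ` is `W P M_φ K : H² → H²`.
(Matrix entries: the paper's `⟨f, g⟩ = ∫ f ḡ` is Mathlib's `⟪g, f⟫`, conjugate-linear in the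
first slot, so the paper's matrix entry `⟨A e_j, e_i⟩` is `⟪e i, A (e j)⟫` here.) -/

open scoped ComplexInnerProductSpace

noncomputable section

lemma aux_zero {a : ℤ → ℂ} (hsum : Summable (fun i : ℤ => ‖a i‖ ^ 2)) (n d : ℤ) (hd : 0 < d)
    (hstep : ∀ j : ℕ, a (n + d * j) = a n) : a n = 0 := by
  have hinj : Function.Injective (fun j : ℕ => n + d * (j : ℤ)) := by
    intro x y h
    simp only [add_right_inj] at h
    have := mul_left_cancel₀ hd.ne' h
    exact_mod_cast this
  have h2 : Summable ((fun i : ℤ => ‖a i‖ ^ 2) ∘ (fun j : ℕ => n + d * (j : ℤ))) :=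
    hsum.comp_injective hinj
  have h3 : Summable (fun _ : ℕ => ‖a n‖ ^ 2) := by
    have : ((fun i : ℤ => ‖a i‖ ^ 2) ∘ (fun j : ℕ => n + d * (j : ℤ)))
        = fun _ : ℕ => ‖a n‖ ^ 2 := by
      funext j; simp [Function.comp, hstep j]
    rwa [this] at h2
  have h4 : ‖a n‖ ^ 2 = 0 := (summable_const_iff _).mp h3
  have := pow_eq_zero_iff (n := 2) (by norm_num) |>.mp h4
  exact norm_eq_zero.mp this

/-- If the slant Hankel operator `L_φ = W H_φ = W P M_φ J` is a slant
H-Toeplitz operator (`L_φ = V_ψ` for some `ψ ∈ L^∞`), then `φ̂(1) = 0` and `φ̂(n) = 0` for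
every `n ≥ 3`, i.e. `φ ∈ (z + z³H^∞)^⊥`. -/
theorem slantHankel_is_slantHToeplitz_implies
    {L2 : Type*} [NormedAddCommGroup L2] [InnerProductSpace ℂ L2] [CompleteSpace L2]
    -- the orthonormal (Fourier) basis `e n ↔ zⁿ` of `L²(𝕋)`
    (e : HilbertBasis ℤ ℂ L2)
    -- the Hardy space `H²`, the closed linear span of `{e n : n ≥ 0}`
    (H2 : Submodule ℂ L2) [CompleteSpace H2]
    (hH2 : H2 = (Submodule.span ℂ (Set.range fun n : ℕ => e (n : ℤ))).topologicalClosure)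
    (eH : ℕ → H2) (heH : ∀ n : ℕ, (eH n : L2) = e (n : ℤ))
    -- the operator `W`: `W e_{2n} = e n`, `W e_{2n+1} = 0` for all `n ∈ ℤ`
    (W : L2 →L[ℂ] L2)
    (hW : ∀ n : ℤ, W (e (2 * n)) = e n ∧ W (e (2 * n + 1)) = 0)
    -- the operator `K : H² → L²`: `K e_{2n} = e n`, `K e_{2n+1} = e_{-n-1}` for all `n ≥ 0`
    (K : H2 →L[ℂ] L2)
    (hK : ∀ n : ℕ, K (eH (2 * n)) = e (n : ℤ) ∧ K (eH (2 * n + 1)) = e (-(n : ℤ) - 1))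
    -- `φ ∈ L^∞`, encoded by its Fourier coefficients `a` and multiplication operator `M = M_φ`
    (a : ℤ → ℂ) (M : L2 →L[ℂ] L2)
    (hM : ∀ i j : ℤ, ⟪e i, M (e j)⟫ = a (i - j))
    -- the flip operator `J : H² → L²`, `J e_n = e_{-n-1}`
    (J : H2 →L[ℂ] L2) (hJ : ∀ n : ℕ, J (eH n) = e (-(n : ℤ) - 1))
    -- the slant Hankel operator `L_φ = W H_φ`, where `H_φ = P M_φ J`
    (L : H2 →L[ℂ] H2)
    (hL : ∀ f : H2, (L f : L2) = W ↑(H2.orthogonalProjection (M (J f))))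
    -- `L_φ` is a slant H-Toeplitz operator: `L_φ = V_ψ` for some `ψ ∈ L^∞`
    (hLV : ∃ (b : ℤ → ℂ) (N : L2 →L[ℂ] L2),
      (∀ i j : ℤ, ⟪e i, N (e j)⟫ = b (i - j)) ∧
      ∀ f : H2, (L f : L2) = W ↑(H2.orthogonalProjection (N (K f)))) :
    a 1 = 0 ∧ ∀ n : ℤ, 3 ≤ n → a n = 0 := by
  obtain ⟨b, N, hN, hV⟩ := hLV
  have hON : ∀ i j : ℤ, (⟪e i, e j⟫ : ℂ) = if i = j then 1 else 0 :=
    orthonormal_iff_ite.mp e.orthonormal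
  have hmem : ∀ m : ℤ, 0 ≤ m → e m ∈ H2 := by
    intro m hm
    rw [hH2]
    apply Submodule.le_topologicalClosure
    exact Submodule.subset_span ⟨m.toNat, by simp [Int.toNat_of_nonneg hm]⟩
  have hWadj : ∀ m : ℤ, (ContinuousLinearMap.adjoint W) (e m) = e (2 * m) := by
    intro m
    apply e.repr.injective
    ext i
    rw [e.repr_apply_apply, e.repr_apply_apply,
      ContinuousLinearMap.adjoint_inner_right]
    rcases Int.even_or_odd i with ⟨q, hq⟩ | ⟨q, hq⟩
    · have : i = 2 * q := by omega
      subst this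
      rw [(hW q).1, hON, hON]
      by_cases h : q = m
      · simp [h]
      · rw [if_neg h, if_neg (by omega)]
    · have : i = 2 * q + 1 := by omega
      subst this
      rw [(hW q).2, inner_zero_left, hON, if_neg (by omega)]
  have hWinner : ∀ (m : ℤ) (x : L2), (⟪e m, W x⟫ : ℂ) = ⟪e (2 * m), x⟫ := by
    intro m x
    rw [← hWadj m, ContinuousLinearMap.adjoint_inner_left]
  have hP : ∀ (m : ℤ) (y : L2), 0 ≤ m →
      (⟪e m, ((H2.orthogonalProjection y : H2) : L2)⟫ : ℂ) = ⟪e m, y⟫ := by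
    intro m y hm
    have horth : y - ((H2.orthogonalProjection y : H2) : L2) ∈ H2ᗮ :=
      H2.sub_starProjection_mem_orthogonal y
    have := (Submodule.mem_orthogonal H2 _).mp horth (e m) (hmem m hm)
    rw [inner_sub_right] at this
    linear_combination -this
  have hWP : ∀ (m : ℕ) (y : L2),
      (⟪e (m : ℤ), W ((H2.orthogonalProjection y : H2) : L2)⟫ : ℂ) = ⟪e (2 * (m : ℤ)), y⟫ := by
    intro m y
    rw [hWinner, hP _ _ (by positivity)]
  have EL : ∀ m n : ℕ, (⟪e (m : ℤ), (L (eH n) : L2)⟫ : ℂ) = a (2 * m + n + 1) := by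
    intro m n
    rw [hL, hWP, hJ, hM]
    ring_nf
  -- integer-indexed relations
  have E1 : ∀ m k : ℤ, 0 ≤ m → 0 ≤ k → a (2 * m + 2 * k + 1) = b (2 * m - k) := by
    intro m k hm hk
    obtain ⟨m, rfl⟩ := Int.eq_ofNat_of_zero_le hm
    obtain ⟨k, rfl⟩ := Int.eq_ofNat_of_zero_le hk
    have h2 : (⟪e (m : ℤ), (L (eH (2 * k)) : L2)⟫ : ℂ) = b (2 * m - k) := by
      rw [hV, hWP, (hK k).1, hN]
    have h3 := (EL m (2 * k)).symm.trans h2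
    rw [show (2 * (m : ℤ) + 2 * (k : ℤ) + 1) = 2 * (m : ℤ) + ((2 * k : ℕ) : ℤ) + 1 by
      push_cast; ring]
    exact h3
  have E2 : ∀ m k : ℤ, 0 ≤ m → 0 ≤ k → a (2 * m + 2 * k + 2) = b (2 * m + k + 1) := by
    intro m k hm hk
    obtain ⟨m, rfl⟩ := Int.eq_ofNat_of_zero_le hm
    obtain ⟨k, rfl⟩ := Int.eq_ofNat_of_zero_le hk
    have h2 : (⟪e (m : ℤ), (L (eH (2 * k + 1)) : L2)⟫ : ℂ) = b (2 * m + k + 1) := by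
      rw [hV, hWP, (hK k).2, hN]
      congr 1; ring
    have h3 := (EL m (2 * k + 1)).symm.trans h2
    rw [show (2 * (m : ℤ) + 2 * (k : ℤ) + 2) = 2 * (m : ℤ) + ((2 * k + 1 : ℕ) : ℤ) + 1 by
      push_cast; ring]
    exact h3
  have stepOdd : ∀ k : ℤ, 0 ≤ k → a (2 * k + 1) = a (2 * k + 7) := by
    intro k hk
    have h1 := E1 0 k (le_refl 0) hk
    have h2 := E1 1 (k + 2) (by norm_num) (by omega)
    rw [show (2 : ℤ) * 0 + 2 * k + 1 = 2 * k + 1 by ring,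
      show (2 : ℤ) * 0 - k = -k by ring] at h1
    rw [show (2 : ℤ) * 1 + 2 * (k + 2) + 1 = 2 * k + 7 by ring,
      show (2 : ℤ) * 1 - (k + 2) = -k by ring] at h2
    rw [h1, h2]
  have stepEven : ∀ k : ℤ, 0 ≤ k → a (2 * k + 4) = a (2 * k + 6) := by
    intro k hk
    have h1 := E2 1 k (by norm_num) hk
    have h2 := E2 0 (k + 2) (le_refl 0) (by omega)
    rw [show (2 : ℤ) * 1 + 2 * k + 2 = 2 * k + 4 by ring,
      show (2 : ℤ) * 1 + k + 1 = k + 3 by ring] at h1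
    rw [show (2 : ℤ) * 0 + 2 * (k + 2) + 2 = 2 * k + 6 by ring,
      show (2 : ℤ) * 0 + (k + 2) + 1 = k + 3 by ring] at h2
    rw [h1, h2]
  have hsum : Summable (fun i : ℤ => ‖a i‖ ^ 2) := by
    have ha : ∀ i : ℤ, a i = e.repr (M (e 0)) i := by
      intro i
      rw [e.repr_apply_apply, hM]
      norm_num
    have hmem2 : Memℓp (e.repr (M (e 0)) : ℤ → ℂ) 2 := (e.repr (M (e 0))).2
    have hs := hmem2.summable (by norm_num)
    apply hs.congr
    intro i
    rw [← ha i, show ((2 : ENNReal)).toReal = ((2 : ℕ) : ℝ) by norm_num, Real.rpow_natCast]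
  have hodd : ∀ k : ℤ, 0 ≤ k → a (2 * k + 1) = 0 := by
    intro k hk
    have hiter : ∀ j : ℕ, a (2 * k + 1 + 6 * j) = a (2 * k + 1) := by
      intro j
      induction j with
      | zero => norm_num
      | succ i ih =>
        rw [show (2 * k + 1 + 6 * ((i + 1 : ℕ) : ℤ)) = 2 * (k + 3 * i) + 7 by push_cast; ring,
          ← stepOdd (k + 3 * i) (by positivity),
          show (2 * (k + 3 * (i : ℤ)) + 1) = 2 * k + 1 + 6 * (i : ℤ) by ring]
        exact_mod_cast ih
    exact aux_zero hsum (2 * k + 1) 6 (by norm_num) hiter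
  have heven : ∀ k : ℤ, 0 ≤ k → a (2 * k + 4) = 0 := by
    intro k hk
    have hiter : ∀ j : ℕ, a (2 * k + 4 + 2 * j) = a (2 * k + 4) := by
      intro j
      induction j with
      | zero => norm_num
      | succ i ih =>
        rw [show (2 * k + 4 + 2 * ((i + 1 : ℕ) : ℤ)) = 2 * (k + i) + 6 by push_cast; ring,
          ← stepEven (k + i) (by positivity),
          show (2 * (k + (i : ℤ)) + 4) = 2 * k + 4 + 2 * (i : ℤ) by ring]
        exact_mod_cast ih
    exact aux_zero hsum (2 * k + 4) 2 (by norm_num) hiter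
  constructor
  · have := hodd 0 (le_refl 0)
    norm_num at this
    exact this
  · intro n hn
    rcases Int.even_or_odd n with ⟨q, hq⟩ | ⟨q, hq⟩
    · have := heven (q - 2) (by omega)
      rw [show 2 * (q - 2) + 4 = n by omega] at this
      exact this
    · have := hodd q (by omega)
      rw [show 2 * q + 1 = n by omega] at this
      exact this
end
end
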